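/- arXiv:2104.14510 — 3 statements merged into one kernel-verified Lean document; each statement's English description precedes it below -/
import Mathlib

section
/- Let G be a simple graph and v a vertex not contained in any induced 2K₂, C₄, or C₅ of G. Then the minimum number of edge deletions needed to make G − v a split graph equals the minimum number needed to make G a split graph. -/
open scoped Classical

def IsClusterGraph {W : Type*} (H : SimpleGraph W) : Prop :=
  ∀ ⦃u v w : W⦄, H.Adj u v → H.Adj v w → u ≠ w → H.Adj u w

def closedNbhd {W : Type*} (G : SimpleGraph W) (v : W) : Set W :=
  insert v (G.neighborSet v)

noncomputable def cut {W : Type*} (G : SimpleGraph W) (U : Set W) : ℕ :=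
  {e ∈ G.edgeSet | ∃ a ∈ U, ∃ b ∉ U, e = s(a, b)}.ncard

noncomputable def clusterDelNum {W : Type*} (G : SimpleGraph W) : ℕ :=
  sInf {n | ∃ E ⊆ G.edgeSet, E.ncard = n ∧ IsClusterGraph (G.deleteEdges E)}

def IsSTCSolution {W : Type*} (G : SimpleGraph W) (E : Set (Sym2 W)) : Prop :=
  E ⊆ G.edgeSet ∧
    ∀ ⦃u w x : W⦄, (G.deleteEdges E).Adj u w → (G.deleteEdges E).Adj w x → u ≠ x →
      ¬(G.deleteEdges E).Adj u x → G.Adj u x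

noncomputable def stcNum {W : Type*} (G : SimpleGraph W) : ℕ :=
  sInf {n | ∃ E : Set (Sym2 W), IsSTCSolution G E ∧ E.ncard = n}

def P4At {W : Type*} (H : SimpleGraph W) (a b c d : W) : Prop :=
  a ≠ b ∧ a ≠ c ∧ a ≠ d ∧ b ≠ c ∧ b ≠ d ∧ c ≠ d ∧
    H.Adj a b ∧ H.Adj b c ∧ H.Adj c d ∧ ¬H.Adj a c ∧ ¬H.Adj b d ∧ ¬H.Adj a d

def C4At {W : Type*} (H : SimpleGraph W) (a b c d : W) : Prop :=
  a ≠ b ∧ a ≠ c ∧ a ≠ d ∧ b ≠ c ∧ b ≠ d ∧ c ≠ d ∧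
    H.Adj a b ∧ H.Adj b c ∧ H.Adj c d ∧ H.Adj d a ∧ ¬H.Adj a c ∧ ¬H.Adj b d

def TwoK2At {W : Type*} (H : SimpleGraph W) (a b c d : W) : Prop :=
  a ≠ b ∧ a ≠ c ∧ a ≠ d ∧ b ≠ c ∧ b ≠ d ∧ c ≠ d ∧
    H.Adj a b ∧ H.Adj c d ∧ ¬H.Adj a c ∧ ¬H.Adj a d ∧ ¬H.Adj b c ∧ ¬H.Adj b d

def C5At {W : Type*} (H : SimpleGraph W) (a b c d e : W) : Prop :=
  a ≠ b ∧ a ≠ c ∧ a ≠ d ∧ a ≠ e ∧ b ≠ c ∧ b ≠ d ∧ b ≠ e ∧ c ≠ d ∧ c ≠ e ∧ d ≠ e ∧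
    H.Adj a b ∧ H.Adj b c ∧ H.Adj c d ∧ H.Adj d e ∧ H.Adj e a ∧
    ¬H.Adj a c ∧ ¬H.Adj a d ∧ ¬H.Adj b d ∧ ¬H.Adj b e ∧ ¬H.Adj c e

def IsTriviallyPerfect {W : Type*} (H : SimpleGraph W) : Prop :=
  (¬∃ a b c d, P4At H a b c d) ∧ (¬∃ a b c d, C4At H a b c d)

def IsIndep {W : Type*} (H : SimpleGraph W) (s : Set W) : Prop :=
  s.Pairwise fun a b => ¬H.Adj a b

def IsSplit {W : Type*} (H : SimpleGraph W) : Prop :=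
  ∃ C : Set W, H.IsClique C ∧ IsIndep H Cᶜ

def IsPseudoSplit {W : Type*} (H : SimpleGraph W) : Prop :=
  (¬∃ a b c d, TwoK2At H a b c d) ∧ (¬∃ a b c d, C4At H a b c d)

noncomputable def sedNum {W : Type*} (G : SimpleGraph W) : ℕ :=
  sInf {n | ∃ E ⊆ G.edgeSet, E.ncard = n ∧ IsSplit (G.deleteEdges E)}

noncomputable def psdNum {W : Type*} (G : SimpleGraph W) : ℕ :=
  sInf {n | ∃ E ⊆ G.edgeSet, E.ncard = n ∧ IsPseudoSplit (G.deleteEdges E)}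

def IsTPCompletion {W : Type*} (G Gh : SimpleGraph W) : Prop :=
  G ≤ Gh ∧ IsTriviallyPerfect Gh

def IsMinimalTPCompletion {W : Type*} (G Gh : SimpleGraph W) : Prop :=
  IsTPCompletion G Gh ∧
    ∀ G' : SimpleGraph W, G ≤ G' → G' ≤ Gh → IsTriviallyPerfect G' → G' = Gh

noncomputable def tpcNum {W : Type*} (G : SimpleGraph W) : ℕ :=
  sInf {n | ∃ Gh : SimpleGraph W, IsTPCompletion G Gh ∧ (Gh.edgeSet \ G.edgeSet).ncard = n}

def IsMinTPCompletion {W : Type*} (G Gh : SimpleGraph W) : Prop :=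
  IsTPCompletion G Gh ∧
    ∀ G' : SimpleGraph W, IsTPCompletion G G' →
      (Gh.edgeSet \ G.edgeSet).ncard ≤ (G'.edgeSet \ G.edgeSet).ncard

def IsModule {W : Type*} (G : SimpleGraph W) (M : Set W) : Prop :=
  ∀ a ∈ M, ∀ b ∈ M, ∀ x ∉ M, (G.Adj a x ↔ G.Adj b x)

namespace SedAux

section Basic
variable {V : Type*} [Fintype V]

/-- edges of `G` with both endpoints inside `S` -/
def eIn (G : SimpleGraph V) (S : Set V) : Set (Sym2 V) :=
  {e | e ∈ G.edgeSet ∧ ∀ x ∈ e, x ∈ S}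

lemma mem_eIn_pair {G : SimpleGraph V} {S : Set V} {x y : V} :
    s(x, y) ∈ eIn G S ↔ G.Adj x y ∧ x ∈ S ∧ y ∈ S := by
  simp [eIn, Sym2.mem_iff, SimpleGraph.mem_edgeSet]

lemma eIn_mono (G : SimpleGraph V) {S T : Set V} (h : S ⊆ T) : eIn G S ⊆ eIn G T :=
  fun e he => ⟨he.1, fun x hx => h (he.2 x hx)⟩

lemma eIn_subset_edgeSet (G : SimpleGraph V) (S : Set V) : eIn G S ⊆ G.edgeSet :=
  fun _ he => he.1

lemma ncard_eIn_mono (G : SimpleGraph V) {S T : Set V} (h : S ⊆ T) :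
    (eIn G S).ncard ≤ (eIn G T).ncard :=
  Set.ncard_le_ncard (eIn_mono G h) (Set.toFinite _)

lemma eIn_insert_eq (G : SimpleGraph V) {I : Set V} {c : V}
    (h : ∀ x ∈ I, ¬G.Adj c x) : eIn G (insert c I) = eIn G I := by
  apply Set.Subset.antisymm
  · rintro e he
    induction e using Sym2.ind with
    | _ x y =>
      rw [mem_eIn_pair] at *
      obtain ⟨hadj, hx, hy⟩ := he
      have hx' : x ∈ I := by
        rcases hx with rfl | hx
        · rcases hy with rfl | hy
          · exact absurd hadj (G.irrefl)
          · exact absurd hadj (h y hy)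
        · exact hx
      have hy' : y ∈ I := by
        rcases hy with rfl | hy
        · exact absurd hadj.symm (h x hx')
        · exact hy
      exact ⟨hadj, hx', hy'⟩
  · exact eIn_mono G (Set.subset_insert _ _)

lemma swap_ncard_le (G : SimpleGraph V) {I : Set V} {w c : V}
    (hw : w ∈ I) (hcI : c ∉ I) (hcw : c ≠ w)
    (hyp : ∀ x ∈ I, x ≠ w → G.Adj c x → G.Adj w x) :
    (eIn G (insert c (I \ {w}))).ncard ≤ (eIn G I).ncard := by
  have hinj : Function.Injective (Sym2.map (Equiv.swap c w)) :=
    Sym2.map.injective (Equiv.injective _)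
  have himg : (Sym2.map (Equiv.swap c w)) '' (eIn G (insert c (I \ {w}))) ⊆ eIn G I := by
    rintro e ⟨e', he', rfl⟩
    induction e' using Sym2.ind with
    | _ x y =>
      rw [mem_eIn_pair] at he'
      obtain ⟨hadj, hx, hy⟩ := he'
      rw [Sym2.map_pair_eq, mem_eIn_pair]
      rw [Set.mem_insert_iff] at hx hy
      rcases hx with hxc | hx'
      · rw [hxc] at hadj ⊢
        have hy' : y ∈ I \ {w} := by
          rcases hy with hyc | hy'
          · rw [hyc] at hadj; exact absurd hadj (G.irrefl)
          · exact hy'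
        have hyc : y ≠ c := fun h => hcI (h ▸ hy'.1)
        rw [Equiv.swap_apply_left, Equiv.swap_apply_of_ne_of_ne hyc hy'.2]
        exact ⟨hyp y hy'.1 hy'.2 hadj, hw, hy'.1⟩
      · have hxc : x ≠ c := fun h => hcI (h ▸ hx'.1)
        rw [Equiv.swap_apply_of_ne_of_ne hxc hx'.2]
        rcases hy with hyc | hy'
        · rw [hyc] at hadj ⊢
          rw [Equiv.swap_apply_left]
          exact ⟨(hyp x hx'.1 hx'.2 hadj.symm).symm, hx'.1, hw⟩
        · have hyc : y ≠ c := fun h => hcI (h ▸ hy'.1)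
          rw [Equiv.swap_apply_of_ne_of_ne hyc hy'.2]
          exact ⟨hadj, hx'.1, hy'.1⟩
  calc (eIn G (insert c (I \ {w}))).ncard
      = ((Sym2.map (Equiv.swap c w)) '' (eIn G (insert c (I \ {w})))).ncard :=
        (Set.ncard_image_of_injective _ hinj).symm
    _ ≤ (eIn G I).ncard := Set.ncard_le_ncard himg (Set.toFinite _)

lemma sedNum_le_of_clique (G : SimpleGraph V) {C : Set V} (hC : G.IsClique C) :
    sedNum G ≤ (eIn G Cᶜ).ncard := by
  apply Nat.sInf_le
  refine ⟨eIn G Cᶜ, eIn_subset_edgeSet G _, rfl, C, ?_, ?_⟩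
  · intro a ha b hb hne
    rw [SimpleGraph.deleteEdges_adj]
    refine ⟨hC ha hb hne, ?_⟩
    rw [mem_eIn_pair]
    rintro ⟨-, ha', -⟩
    exact ha' ha
  · intro a ha b hb hne hadj
    rw [SimpleGraph.deleteEdges_adj] at hadj
    exact hadj.2 (mem_eIn_pair.mpr ⟨hadj.1, ha, hb⟩)

lemma exists_clique_le_sedNum (G : SimpleGraph V) :
    ∃ C : Set V, G.IsClique C ∧ (eIn G Cᶜ).ncard ≤ sedNum G := by
  have hne : {n | ∃ E ⊆ G.edgeSet, E.ncard = n ∧ IsSplit (G.deleteEdges E)}.Nonempty := by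
    refine ⟨G.edgeSet.ncard, G.edgeSet, subset_rfl, rfl, ∅, SimpleGraph.isClique_empty, ?_⟩
    intro a _ b _ hne hadj
    rw [SimpleGraph.deleteEdges_adj] at hadj
    exact hadj.2 hadj.1
  obtain ⟨E, hE, hcard, Cl, hclq, hind⟩ := Nat.sInf_mem hne
  refine ⟨Cl, ?_, ?_⟩
  · intro a ha b hb hne'
    exact ((SimpleGraph.deleteEdges_adj).mp (hclq ha hb hne')).1
  · unfold sedNum
    rw [← hcard]
    apply Set.ncard_le_ncard _ (Set.toFinite _)
    intro e he
    induction e using Sym2.ind with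
    | _ x y =>
      rw [mem_eIn_pair] at he
      obtain ⟨hadj, hx, hy⟩ := he
      by_contra hnot
      exact hind hx hy hadj.ne ((SimpleGraph.deleteEdges_adj).mpr ⟨hadj, hnot⟩)


end Basic

section Combinatorial
variable {V : Type*} [Fintype V]

lemma dichotomy (G : SimpleGraph V) (v : V)
    (h2K2 : ∀ a b c d : V, TwoK2At G a b c d → v ∉ ({a, b, c, d} : Set V))
    (hC4 : ∀ a b c d : V, C4At G a b c d → v ∉ ({a, b, c, d} : Set V))
    (hC5 : ∀ a b c d e : V, C5At G a b c d e → v ∉ ({a, b, c, d, e} : Set V)) :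
    (∀ x y : V, x ≠ v → ¬G.Adj v x → y ≠ v → ¬G.Adj v y → ¬G.Adj x y) ∨
      G.IsClique (G.neighborSet v) := by
  by_contra hcon
  push_neg at hcon
  obtain ⟨h1, h2⟩ := hcon
  obtain ⟨x, y, hxv, hvx, hyv, hvy, hxy⟩ := h1
  rw [SimpleGraph.isClique_iff, Set.Pairwise] at h2
  push_neg at h2
  obtain ⟨w1, hw1, w2, hw2, hne12, hnadj12⟩ := h2
  rw [SimpleGraph.mem_neighborSet] at hw1 hw2
  have hw1x : w1 ≠ x := fun h => hvx (h ▸ hw1)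
  have hw1y : w1 ≠ y := fun h => hvy (h ▸ hw1)
  have hw2x : w2 ≠ x := fun h => hvx (h ▸ hw2)
  have hw2y : w2 ≠ y := fun h => hvy (h ▸ hw2)
  have step1 : G.Adj w1 x ∨ G.Adj w1 y := by
    by_contra hs
    push_neg at hs
    exact h2K2 v w1 x y
      ⟨hw1.ne, Ne.symm hxv, Ne.symm hyv, hw1x, hw1y, hxy.ne, hw1, hxy, hvx, hvy, hs.1, hs.2⟩
      (Set.mem_insert _ _)
  have step1' : G.Adj w2 x ∨ G.Adj w2 y := by
    by_contra hs
    push_neg at hs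
    exact h2K2 v w2 x y
      ⟨hw2.ne, Ne.symm hxv, Ne.symm hyv, hw2x, hw2y, hxy.ne, hw2, hxy, hvx, hvy, hs.1, hs.2⟩
      (Set.mem_insert _ _)
  have step2x : ¬(G.Adj w1 x ∧ G.Adj w2 x) := by
    rintro ⟨h1x, h2x⟩
    exact hC4 v w1 x w2
      ⟨hw1.ne, Ne.symm hxv, hw2.ne, hw1x, hne12, Ne.symm hw2x, hw1, h1x, h2x.symm, hw2.symm,
        hvx, hnadj12⟩
      (Set.mem_insert _ _)
  have step2y : ¬(G.Adj w1 y ∧ G.Adj w2 y) := by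
    rintro ⟨h1y, h2y⟩
    exact hC4 v w1 y w2
      ⟨hw1.ne, Ne.symm hyv, hw2.ne, hw1y, hne12, Ne.symm hw2y, hw1, h1y, h2y.symm, hw2.symm,
        hvy, hnadj12⟩
      (Set.mem_insert _ _)
  rcases step1 with h1x | h1y
  · have h2x : ¬G.Adj w2 x := fun h => step2x ⟨h1x, h⟩
    have h2y : G.Adj w2 y := step1'.resolve_left h2x
    have h1y : ¬G.Adj w1 y := fun h => step2y ⟨h, h2y⟩
    exact hC5 v w1 x y w2
      ⟨hw1.ne, Ne.symm hxv, Ne.symm hyv, hw2.ne, hw1x, hw1y, hne12, hxy.ne, Ne.symm hw2x,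
        Ne.symm hw2y, hw1, h1x, hxy, h2y.symm, hw2.symm, hvx, hvy, h1y, hnadj12,
        fun h => h2x h.symm⟩
      (Set.mem_insert _ _)
  · have h2y : ¬G.Adj w2 y := fun h => step2y ⟨h1y, h⟩
    have h2x : G.Adj w2 x := step1'.resolve_right h2y
    have h1x : ¬G.Adj w1 x := fun h => step2x ⟨h, h2x⟩
    exact hC5 v w1 y x w2
      ⟨hw1.ne, Ne.symm hyv, Ne.symm hxv, hw2.ne, hw1y, hw1x, hne12, Ne.symm hxy.ne,
        Ne.symm hw2y, Ne.symm hw2x, hw1, h1y, hxy.symm, h2x.symm, hw2.symm, hvy, hvx, h1x,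
        hnadj12, fun h => h2y h.symm⟩
      (Set.mem_insert _ _)

lemma caseB (G : SimpleGraph V) (v : V)
    (hC4 : ∀ a b c d : V, C4At G a b c d → v ∉ ({a, b, c, d} : Set V))
    (hM : ∀ x y : V, x ≠ v → ¬G.Adj v x → y ≠ v → ¬G.Adj v y → ¬G.Adj x y)
    (C : Set V) (hC : G.IsClique C) (hvC : v ∉ C) :
    ∃ C', G.IsClique C' ∧ (eIn G C'ᶜ).ncard ≤ (eIn G (Cᶜ \ {v})).ncard := by
  by_cases hc : ∃ c ∈ C, ¬G.Adj v c
  · obtain ⟨c, hcC, hvc⟩ := hc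
    have hcv : c ≠ v := fun h => hvC (h ▸ hcC)
    have hCN : ∀ u ∈ C, u ≠ c → G.Adj v u := by
      intro u huC huc
      by_contra hvu
      exact hM u c (fun h => hvC (h ▸ huC)) hvu hcv hvc (hC huC hcC huc)
    by_cases hw : ∃ w' ∈ Cᶜ \ {v}, G.Adj c w'
    · obtain ⟨w', hw'I, hcw'⟩ := hw
      have hw'v : w' ≠ v := by simpa using hw'I.2
      have hvw' : G.Adj v w' := by
        by_contra hvw'
        exact hM c w' hcv hvc hw'v hvw' hcw'
      have hw'C : ∀ u ∈ C, u ≠ c → G.Adj w' u := by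
        intro u huC huc
        by_contra hw'u
        exact hC4 v w' c u
          ⟨hvw'.ne, Ne.symm hcv, Ne.symm (fun h => hvC (h ▸ huC)), Ne.symm hcw'.ne,
            fun h => hw'I.1 (h ▸ huC), Ne.symm huc, hvw', hcw'.symm,
            hC hcC huC (Ne.symm huc), (hCN u huC huc).symm, hvc, hw'u⟩
          (Set.mem_insert _ _)
      have hinner : G.IsClique (insert w' (C \ {c})) :=
        (hC.subset Set.diff_subset).insert
          (fun b hb hne => hw'C b hb.1 (by simpa using hb.2))
      have hclq : G.IsClique (insert v (insert w' (C \ {c}))) := by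
        apply hinner.insert
        intro b hb _
        rcases hb with rfl | hb
        · exact hvw'
        · exact hCN b hb.1 (by simpa using hb.2)
      refine ⟨_, hclq, ?_⟩
      have hset : (insert v (insert w' (C \ {c})))ᶜ = insert c ((Cᶜ \ {v}) \ {w'}) := by
        ext u
        simp only [Set.mem_compl_iff, Set.mem_insert_iff, Set.mem_diff,
          Set.mem_singleton_iff]
        push_neg
        constructor
        · rintro ⟨huv, huw', hu⟩
          by_cases huc : u = c
          · exact Or.inl huc
          · exact Or.inr ⟨⟨fun h => huc (hu h), huv⟩, huw'⟩
        · rintro (rfl | ⟨⟨huC, huv⟩, huw'⟩)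
          · exact ⟨hcv, hcw'.ne, fun _ => rfl⟩
          · exact ⟨huv, huw', fun h => absurd h huC⟩
      rw [hset]
      apply swap_ncard_le G hw'I (fun h => h.1 hcC) hcw'.ne
      intro x hxI hxw' hcx
      have hxv : x ≠ v := by simpa using hxI.2
      have hvx : G.Adj v x := by
        by_contra hvx
        exact hM c x hcv hvc hxv hvx hcx
      by_contra hw'x
      exact hC4 v w' c x
        ⟨hvw'.ne, Ne.symm hcv, Ne.symm hxv, Ne.symm hcw'.ne, Ne.symm hxw',
          fun h => hxI.1 (h ▸ hcC), hvw', hcw'.symm, hcx, hvx.symm, hvc, hw'x⟩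
        (Set.mem_insert _ _)
    · push_neg at hw
      refine ⟨insert v (C \ {c}), ?_, ?_⟩
      · exact (hC.subset Set.diff_subset).insert
          (fun b hb _ => hCN b hb.1 (by simpa using hb.2))
      · have hset : (insert v (C \ {c}))ᶜ = insert c (Cᶜ \ {v}) := by
          ext u
          simp only [Set.mem_compl_iff, Set.mem_insert_iff, Set.mem_diff,
            Set.mem_singleton_iff]
          push_neg
          constructor
          · rintro ⟨huv, hu⟩
            by_cases huc : u = c
            · exact Or.inl huc
            · exact Or.inr ⟨fun h => huc (hu h), huv⟩
          · rintro (rfl | ⟨huC, huv⟩)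
            · exact ⟨hcv, fun _ => rfl⟩
            · exact ⟨huv, fun h => absurd h huC⟩
        rw [hset, eIn_insert_eq G (fun x hx hcx => hw x hx hcx)]
  · push_neg at hc
    refine ⟨insert v C, hC.insert (fun b hb _ => hc b hb), ?_⟩
    have hset : (insert v C)ᶜ = Cᶜ \ {v} := by
      ext u
      simp only [Set.mem_compl_iff, Set.mem_insert_iff, Set.mem_diff, Set.mem_singleton_iff]
      push_neg
      tauto
    rw [hset]

lemma caseA (G : SimpleGraph V) (v : V)
    (h2K2 : ∀ a b c d : V, TwoK2At G a b c d → v ∉ ({a, b, c, d} : Set V))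
    (hN : G.IsClique (G.neighborSet v)) :
    ∀ n : ℕ, ∀ C : Set V, ((Cᶜ \ {v}) ∩ G.neighborSet v).ncard = n →
      G.IsClique C → v ∉ C →
      ∃ C', G.IsClique C' ∧ (eIn G C'ᶜ).ncard ≤ (eIn G (Cᶜ \ {v})).ncard := by
  intro n
  induction n using Nat.strongRecOn with
  | ind n ih =>
    intro C hWcard hC hvC
    by_cases hW : ((Cᶜ \ {v}) ∩ G.neighborSet v) = ∅
    · refine ⟨C, hC, ?_⟩
      have hset : Cᶜ = insert v (Cᶜ \ {v}) := by
        ext u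
        simp only [Set.mem_compl_iff, Set.mem_insert_iff, Set.mem_diff, Set.mem_singleton_iff]
        constructor
        · intro hu
          by_cases huv : u = v
          · exact Or.inl huv
          · exact Or.inr ⟨hu, huv⟩
        · rintro (rfl | ⟨hu, _⟩)
          · exact hvC
          · exact hu
      have hnonbr : ∀ x ∈ Cᶜ \ {v}, ¬G.Adj v x := by
        intro x hx hvx
        have hmem : x ∈ (Cᶜ \ {v}) ∩ G.neighborSet v := ⟨hx, hvx⟩
        rw [hW] at hmem
        exact hmem
      nth_rewrite 1 [hset]
      rw [eIn_insert_eq G hnonbr]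
    · obtain ⟨w, hwW⟩ := Set.nonempty_iff_ne_empty.mpr hW
      obtain ⟨hwI, hvw⟩ := hwW
      rw [SimpleGraph.mem_neighborSet] at hvw
      have hwv : w ≠ v := by simpa using hwI.2
      by_cases hd : ∃ d ∈ C, ¬G.Adj w d
      · obtain ⟨d, hdC, hwd⟩ := hd
        have hdv : d ≠ v := fun h => hvC (h ▸ hdC)
        have hdw : d ≠ w := fun h => hwI.1 (h ▸ hdC)
        have hvd : ¬G.Adj v d := by
          intro h
          exact hwd (hN hvw
            h (Ne.symm hdw))
        have huniq : ∀ u ∈ C, u ≠ d → G.Adj w u := by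
          intro u huC hud
          by_contra hwu
          have huv : u ≠ v := fun h => hvC (h ▸ huC)
          have hvu : ¬G.Adj v u := by
            intro h
            exact hwu (hN hvw
              h (fun he => hwI.1 (he ▸ huC)))
          exact h2K2 v w d u
            ⟨hvw.ne, Ne.symm hdv, Ne.symm huv, Ne.symm hdw, fun he => hwI.1 (he ▸ huC),
              Ne.symm hud, hvw, hC hdC huC (Ne.symm hud), hvd, hvu, hwd, hwu⟩
            (Set.mem_insert _ _)
        have hclq₂ : G.IsClique (insert w (C \ {d})) :=
          (hC.subset Set.diff_subset).insert
            (fun b hb hne => huniq b hb.1 (by simpa using hb.2))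
        have hv₂ : v ∉ insert w (C \ {d}) := by
          rintro (rfl | hb)
          · exact hwv rfl
          · exact hvC hb.1
        have hset : (insert w (C \ {d}))ᶜ \ {v} = insert d ((Cᶜ \ {v}) \ {w}) := by
          ext u
          simp only [Set.mem_compl_iff, Set.mem_insert_iff, Set.mem_diff,
            Set.mem_singleton_iff]
          push_neg
          constructor
          · rintro ⟨⟨huw, hu⟩, huv⟩
            by_cases hud : u = d
            · exact Or.inl hud
            · exact Or.inr ⟨⟨fun h => hud (hu h), huv⟩, huw⟩
          · rintro (rfl | ⟨⟨huC, huv⟩, huw⟩)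
            · exact ⟨⟨hdw, fun _ => rfl⟩, hdv⟩
            · exact ⟨⟨huw, fun h => absurd h huC⟩, huv⟩
        have hWset : ((insert w (C \ {d}))ᶜ \ {v}) ∩ G.neighborSet v
            = (((Cᶜ \ {v}) ∩ G.neighborSet v)) \ {w} := by
          rw [hset]
          ext u
          simp only [Set.mem_inter_iff, Set.mem_insert_iff, Set.mem_diff,
            Set.mem_singleton_iff, SimpleGraph.mem_neighborSet]
          constructor
          · rintro ⟨rfl | ⟨huI, huw⟩, hu2⟩
            · exact absurd hu2 hvd
            · exact ⟨⟨huI, hu2⟩, huw⟩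
          · rintro ⟨⟨huI, hu2⟩, huw⟩
            exact ⟨Or.inr ⟨huI, huw⟩, hu2⟩
        have hlt : (((insert w (C \ {d}))ᶜ \ {v}) ∩ G.neighborSet v).ncard < n := by
          rw [hWset, ← hWcard]
          exact Set.ncard_diff_singleton_lt_of_mem ⟨hwI, hvw⟩ (Set.toFinite _)
        obtain ⟨C', hC', hle⟩ := ih _ hlt (insert w (C \ {d})) rfl hclq₂ hv₂
        refine ⟨C', hC', hle.trans ?_⟩
        rw [hset]
        apply swap_ncard_le G hwI (fun h => h.1 hdC) hdw
        intro x hxI hxw hdx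
        by_contra hwx
        have hxv : x ≠ v := by simpa using hxI.2
        have hvx : ¬G.Adj v x := by
          intro h
          exact hwx (hN hvw
            h (Ne.symm hxw))
        exact h2K2 v w d x
          ⟨hvw.ne, Ne.symm hdv, Ne.symm hxv, Ne.symm hdw, Ne.symm hxw,
            fun h => hxI.1 (h ▸ hdC), hvw, hdx, hvd, hvx, hwd, hwx⟩
          (Set.mem_insert _ _)
      · push_neg at hd
        have hclq₂ : G.IsClique (insert w C) := hC.insert (fun b hb _ => hd b hb)
        have hv₂ : v ∉ insert w C := by
          rintro (rfl | hb)
          · exact hwv rfl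
          · exact hvC hb
        have hset : (insert w C)ᶜ \ {v} = (Cᶜ \ {v}) \ {w} := by
          ext u
          simp only [Set.mem_compl_iff, Set.mem_insert_iff, Set.mem_diff,
            Set.mem_singleton_iff]
          push_neg
          tauto
        have hWset : ((insert w C)ᶜ \ {v}) ∩ G.neighborSet v
            = (((Cᶜ \ {v}) ∩ G.neighborSet v)) \ {w} := by
          rw [hset]
          ext u
          simp only [Set.mem_inter_iff, Set.mem_diff, Set.mem_singleton_iff]
          tauto
        have hlt : (((insert w C)ᶜ \ {v}) ∩ G.neighborSet v).ncard < n := by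
          rw [hWset, ← hWcard]
          exact Set.ncard_diff_singleton_lt_of_mem ⟨hwI, hvw⟩ (Set.toFinite _)
        obtain ⟨C', hC', hle⟩ := ih _ hlt (insert w C) rfl hclq₂ hv₂
        refine ⟨C', hC', hle.trans ?_⟩
        rw [hset]
        exact ncard_eIn_mono G Set.diff_subset

lemma hard_core (G : SimpleGraph V) (v : V)
    (h2K2 : ∀ a b c d : V, TwoK2At G a b c d → v ∉ ({a, b, c, d} : Set V))
    (hC4 : ∀ a b c d : V, C4At G a b c d → v ∉ ({a, b, c, d} : Set V))
    (hC5 : ∀ a b c d e : V, C5At G a b c d e → v ∉ ({a, b, c, d, e} : Set V))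
    (C : Set V) (hC : G.IsClique C) (hvC : v ∉ C) :
    ∃ C', G.IsClique C' ∧ (eIn G C'ᶜ).ncard ≤ (eIn G (Cᶜ \ {v})).ncard := by
  rcases dichotomy G v h2K2 hC4 hC5 with hM | hN
  · exact caseB G v hC4 hM C hC hvC
  · exact caseA G v h2K2 hN _ C rfl hC hvC

end Combinatorial

section Transfer
variable {V : Type*} [Fintype V]

lemma induce_adj' (G : SimpleGraph V) {S : Set V} {a b : S} :
    (G.induce S).Adj a b ↔ G.Adj ↑a ↑b := by simp

lemma eIn_induce_ncard (G : SimpleGraph V) (v : V) (T₀ : Set {u : V | u ≠ v}) :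
    (eIn (G.induce {u : V | u ≠ v}) T₀).ncard = (eIn G (Subtype.val '' T₀)).ncard := by
  have himg : Sym2.map (Subtype.val) '' (eIn (G.induce {u : V | u ≠ v}) T₀)
      = eIn G (Subtype.val '' T₀) := by
    apply Set.Subset.antisymm
    · rintro e ⟨e', he', rfl⟩
      induction e' using Sym2.ind with
      | _ a b =>
        rw [mem_eIn_pair] at he'
        rw [Sym2.map_pair_eq, mem_eIn_pair]
        exact ⟨(induce_adj' G).mp he'.1, ⟨a, he'.2.1, rfl⟩, ⟨b, he'.2.2, rfl⟩⟩
    · intro e he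
      induction e using Sym2.ind with
      | _ x y =>
        rw [mem_eIn_pair] at he
        obtain ⟨hadj, ⟨a, haT, rfl⟩, ⟨b, hbT, rfl⟩⟩ := he
        exact ⟨s(a, b), mem_eIn_pair.mpr ⟨(induce_adj' G).mpr hadj, haT, hbT⟩,
          by rw [Sym2.map_pair_eq]⟩
  rw [← himg, Set.ncard_image_of_injective _ (Sym2.map.injective Subtype.coe_injective)]

lemma val_compl_image (v : V) (D₀ : Set {u : V | u ≠ v}) :
    Subtype.val '' (D₀ᶜ) = (Subtype.val '' D₀)ᶜ \ {v} := by
  ext x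
  constructor
  · rintro ⟨a, haD, rfl⟩
    refine ⟨?_, fun h => a.2 (by simpa using h)⟩
    rintro ⟨b, hbD, hba⟩
    exact haD (by rwa [show b = a from Subtype.coe_injective hba] at hbD)
  · rintro ⟨hx1, hx2⟩
    have hxv : x ≠ v := by simpa using hx2
    refine ⟨⟨x, hxv⟩, ?_, rfl⟩
    intro hmem
    exact hx1 ⟨⟨x, hxv⟩, hmem, rfl⟩

end Transfer
end SedAux

theorem stmt16 {V : Type*} [Fintype V] (G : SimpleGraph V) (v : V)
    (h2K2 : ∀ a b c d : V, TwoK2At G a b c d → v ∉ ({a, b, c, d} : Set V))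
    (hC4 : ∀ a b c d : V, C4At G a b c d → v ∉ ({a, b, c, d} : Set V))
    (hC5 : ∀ a b c d e : V, C5At G a b c d e → v ∉ ({a, b, c, d, e} : Set V)) :
    sedNum (G.induce {u : V | u ≠ v}) = sedNum G := by
  classical
  apply le_antisymm
  · -- sedNum (G.induce S) ≤ sedNum G
    obtain ⟨C, hC, hle⟩ := SedAux.exists_clique_le_sedNum G
    have hC0 : (G.induce {u : V | u ≠ v}).IsClique {u : {u : V | u ≠ v} | ↑u ∈ C} := by
      intro a ha b hb hne
      exact (SedAux.induce_adj' G).mpr (hC ha hb (fun h => hne (Subtype.coe_injective h)))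
    refine le_trans (SedAux.sedNum_le_of_clique _ hC0) ?_
    have himg : Subtype.val '' (({u : {u : V | u ≠ v} | ↑u ∈ C})ᶜ) = Cᶜ \ {v} := by
      ext x
      constructor
      · rintro ⟨a, ha, rfl⟩
        exact ⟨ha, fun h => a.2 (by simpa using h)⟩
      · rintro ⟨hx1, hx2⟩
        exact ⟨⟨x, by simpa using hx2⟩, hx1, rfl⟩
    rw [SedAux.eIn_induce_ncard, himg]
    exact le_trans (SedAux.ncard_eIn_mono G Set.diff_subset) hle
  · -- sedNum G ≤ sedNum (G.induce S)
    obtain ⟨C₀, hC₀, hle⟩ := SedAux.exists_clique_le_sedNum (G.induce {u : V | u ≠ v})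
    have hC : G.IsClique (Subtype.val '' C₀) := by
      rintro a ⟨a', ha', rfl⟩ b ⟨b', hb', rfl⟩ hne
      exact (SedAux.induce_adj' G).mp (hC₀ ha' hb' (fun h => hne (by rw [h])))
    have hvC : v ∉ Subtype.val '' C₀ := by
      rintro ⟨a, _, ha⟩
      exact a.2 ha
    obtain ⟨C', hC', hle2⟩ := SedAux.hard_core G v h2K2 hC4 hC5 (Subtype.val '' C₀) hC hvC
    refine le_trans (SedAux.sedNum_le_of_clique G hC') (le_trans hle2 ?_)
    rw [← SedAux.val_compl_image v C₀, ← SedAux.eIn_induce_ncard]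
    exact hle
end

section
/- A pseudo-split graph contains at most one induced C₅, and for any graph G: opt(G) ≤ sed(G) ≤ opt(G) + 2, where opt(G) is the minimum number of edge deletions to make G pseudo-split and sed(G) is the minimum number to make G split. -/
open scoped Classical

section C5Aux

variable {W : Type*} {H : SimpleGraph W}

lemma outside_c5 (h2 : ¬∃ a b c d, TwoK2At H a b c d)
    (h4 : ¬∃ a b c d, C4At H a b c d) {a b c d e v : W}
    (h5 : C5At H a b c d e)
    (hva : v ≠ a) (hvb : v ≠ b) (hvc : v ≠ c) (hvd : v ≠ d) (hve : v ≠ e) :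
    (H.Adj v a ∧ H.Adj v b ∧ H.Adj v c ∧ H.Adj v d ∧ H.Adj v e) ∨
    (¬H.Adj v a ∧ ¬H.Adj v b ∧ ¬H.Adj v c ∧ ¬H.Adj v d ∧ ¬H.Adj v e) := by
  obtain ⟨nab, nac, nad, nae, nbc, nbd, nbe, ncd, nce, nde,
    Aab, Abc, Acd, Ade, Aea, Nac, Nad, Nbd, Nbe, Nce⟩ := h5
  by_cases pa : H.Adj v a <;> by_cases pb : H.Adj v b <;> by_cases pc : H.Adj v c <;>
    by_cases pd : H.Adj v d <;> by_cases pe : H.Adj v e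
  all_goals first
    | exact Or.inl ⟨pa, pb, pc, pd, pe⟩
    | exact Or.inr ⟨pa, pb, pc, pd, pe⟩
    | exact (h2 ⟨v, a, c, d, hva, hvc, hvd, nac, nad, ncd, pa, Acd, pc, pd, Nac, Nad⟩).elim
    | exact (h2 ⟨v, b, d, e, hvb, hvd, hve, nbd, nbe, nde, pb, Ade, pd, pe, Nbd, Nbe⟩).elim
    | exact (h2 ⟨v, c, e, a, hvc, hve, hva, nce, nac.symm, nae.symm, pc, Aea, pe, pa, Nce,
        fun h => Nac h.symm⟩).elim
    | exact (h2 ⟨v, d, a, b, hvd, hva, hvb, nad.symm, nbd.symm, nab, pd, Aab, pa, pb,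
        fun h => Nad h.symm, fun h => Nbd h.symm⟩).elim
    | exact (h2 ⟨v, e, b, c, hve, hvb, hvc, nbe.symm, nce.symm, nbc, pe, Abc, pb, pc,
        fun h => Nbe h.symm, fun h => Nce h.symm⟩).elim
    | exact (h4 ⟨v, a, b, c, hva, hvb, hvc, nab, nac, nbc, pa, Aab, Abc, pc.symm, pb, Nac⟩).elim
    | exact (h4 ⟨v, b, c, d, hvb, hvc, hvd, nbc, nbd, ncd, pb, Abc, Acd, pd.symm, pc, Nbd⟩).elim
    | exact (h4 ⟨v, c, d, e, hvc, hvd, hve, ncd, nce, nde, pc, Acd, Ade, pe.symm, pd, Nce⟩).elim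
    | exact (h4 ⟨v, d, e, a, hvd, hve, hva, nde, nad.symm, nae.symm, pd, Ade, Aea, pa.symm, pe,
        fun h => Nad h.symm⟩).elim
    | exact (h4 ⟨v, e, a, b, hve, hva, hvb, nae.symm, nbe.symm, nab, pe, Aea, Aab, pb.symm, pa,
        fun h => Nbe h.symm⟩).elim

lemma c5_nbrs {a b c d e v : W} (h5 : C5At H a b c d e)
    (hv : v = a ∨ v = b ∨ v = c ∨ v = d ∨ v = e) :
    ∃ w1 w2, v ≠ w1 ∧ v ≠ w2 ∧ w1 ≠ w2 ∧ H.Adj v w1 ∧ H.Adj v w2 ∧ ¬H.Adj w1 w2 := by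
  obtain ⟨nab, nac, nad, nae, nbc, nbd, nbe, ncd, nce, nde,
    Aab, Abc, Acd, Ade, Aea, Nac, Nad, Nbd, Nbe, Nce⟩ := h5
  rcases hv with rfl | rfl | rfl | rfl | rfl
  · exact ⟨b, e, nab, nae, nbe, Aab, Aea.symm, Nbe⟩
  · exact ⟨a, c, nab.symm, nbc, nac, Aab.symm, Abc, Nac⟩
  · exact ⟨b, d, nbc.symm, ncd, nbd, Abc.symm, Acd, Nbd⟩
  · exact ⟨c, e, ncd.symm, nde, nce, Acd.symm, Ade, Nce⟩
  · exact ⟨d, a, nde.symm, nae.symm, nad.symm, Ade.symm, Aea, fun h => Nad h.symm⟩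

lemma c5_nonnbrs {a b c d e v : W} (h5 : C5At H a b c d e)
    (hv : v = a ∨ v = b ∨ v = c ∨ v = d ∨ v = e) :
    ∃ u1 u2, v ≠ u1 ∧ v ≠ u2 ∧ u1 ≠ u2 ∧ ¬H.Adj v u1 ∧ ¬H.Adj v u2 ∧ H.Adj u1 u2 := by
  obtain ⟨nab, nac, nad, nae, nbc, nbd, nbe, ncd, nce, nde,
    Aab, Abc, Acd, Ade, Aea, Nac, Nad, Nbd, Nbe, Nce⟩ := h5
  rcases hv with rfl | rfl | rfl | rfl | rfl
  · exact ⟨c, d, nac, nad, ncd, Nac, Nad, Acd⟩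
  · exact ⟨d, e, nbd, nbe, nde, Nbd, Nbe, Ade⟩
  · exact ⟨e, a, nce, nac.symm, nae.symm, Nce, fun h => Nac h.symm, Aea⟩
  · exact ⟨a, b, nad.symm, nbd.symm, nab, fun h => Nad h.symm, fun h => Nbd h.symm, Aab⟩
  · exact ⟨b, c, nbe.symm, nce.symm, nbc, fun h => Nbe h.symm, fun h => Nce h.symm, Abc⟩

lemma c5_subset (h2 : ¬∃ a b c d, TwoK2At H a b c d)
    (h4 : ¬∃ a b c d, C4At H a b c d) {a b c d e a' b' c' d' e' : W}
    (h5 : C5At H a b c d e) (h5' : C5At H a' b' c' d' e') :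
    ({a', b', c', d', e'} : Set W) ⊆ ({a, b, c, d, e} : Set W) := by
  intro v hv
  by_contra hvS
  simp only [Set.mem_insert_iff, Set.mem_singleton_iff, not_or] at hv hvS
  obtain ⟨hva, hvb, hvc, hvd, hve⟩ := hvS
  have h5c := h5
  obtain ⟨nab, nac, nad, nae, nbc, nbd, nbe, ncd, nce, nde,
    Aab, Abc, Acd, Ade, Aea, Nac, Nad, Nbd, Nbe, Nce⟩ := h5c
  rcases outside_c5 h2 h4 h5 hva hvb hvc hvd hve with hcomp | hanti
  · -- v complete to S
    obtain ⟨u1, u2, hvu1, hvu2, h12, N1, N2, A12⟩ := c5_nonnbrs h5' hv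
    have key : ∀ u : W, ¬H.Adj v u →
        u ≠ a ∧ u ≠ b ∧ u ≠ c ∧ u ≠ d ∧ u ≠ e := by
      intro u hn
      refine ⟨?_, ?_, ?_, ?_, ?_⟩ <;> rintro rfl
      · exact hn hcomp.1
      · exact hn hcomp.2.1
      · exact hn hcomp.2.2.1
      · exact hn hcomp.2.2.2.1
      · exact hn hcomp.2.2.2.2
    obtain ⟨h1a, h1b, h1c, h1d, h1e⟩ := key u1 N1
    obtain ⟨h2a, h2b, h2c, h2d, h2e⟩ := key u2 N2
    rcases outside_c5 h2 h4 h5 h1a h1b h1c h1d h1e with hc1 | ha1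
    · exact h4 ⟨v, a, u1, c, hva, hvu1, hvc, Ne.symm h1a, nac, h1c, hcomp.1,
        hc1.1.symm, hc1.2.2.1, hcomp.2.2.1.symm, N1, Nac⟩
    · rcases outside_c5 h2 h4 h5 h2a h2b h2c h2d h2e with hc2 | ha2
      · exact h4 ⟨v, a, u2, c, hva, hvu2, hvc, Ne.symm h2a, nac, h2c, hcomp.1,
          hc2.1.symm, hc2.2.2.1, hcomp.2.2.1.symm, N2, Nac⟩
      · exact h2 ⟨u1, u2, a, b, h12, h1a, h1b, h2a, h2b, nab, A12, Aab,
          ha1.1, ha1.2.1, ha2.1, ha2.2.1⟩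
  · -- v anticomplete to S
    obtain ⟨w1, w2, hvw1, hvw2, hw12, A1, A2, NA12⟩ := c5_nbrs h5' hv
    have key : ∀ w : W, H.Adj v w →
        w ≠ a ∧ w ≠ b ∧ w ≠ c ∧ w ≠ d ∧ w ≠ e := by
      intro w hw
      refine ⟨?_, ?_, ?_, ?_, ?_⟩ <;> rintro rfl
      · exact hanti.1 hw
      · exact hanti.2.1 hw
      · exact hanti.2.2.1 hw
      · exact hanti.2.2.2.1 hw
      · exact hanti.2.2.2.2 hw
    obtain ⟨h1a, h1b, h1c, h1d, h1e⟩ := key w1 A1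
    obtain ⟨h2a, h2b, h2c, h2d, h2e⟩ := key w2 A2
    rcases outside_c5 h2 h4 h5 h1a h1b h1c h1d h1e with hc1 | ha1
    · rcases outside_c5 h2 h4 h5 h2a h2b h2c h2d h2e with hc2 | ha2
      · exact h4 ⟨w1, v, w2, a, hvw1.symm, hw12, h1a, hvw2, hva, h2a,
          A1.symm, A2, hc2.1, hc1.1.symm, NA12, hanti.1⟩
      · exact h2 ⟨v, w2, a, b, hvw2, hva, hvb, h2a, h2b, nab, A2, Aab,
          hanti.1, hanti.2.1, ha2.1, ha2.2.1⟩
    · exact h2 ⟨v, w1, a, b, hvw1, hva, hvb, h1a, h1b, nab, A1, Aab,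
        hanti.1, hanti.2.1, ha1.1, ha1.2.1⟩

end C5Aux
section SplitAux

variable {W : Type*} {H : SimpleGraph W}

lemma split_imp_pseudo (h : IsSplit H) : IsPseudoSplit H := by
  obtain ⟨C, hC, hI⟩ := h
  constructor
  · rintro ⟨a, b, c, d, nab, nac, nad, nbc, nbd, ncd, Aab, Acd, N1, N2, N3, N4⟩
    have h1 : a ∈ C ∨ b ∈ C := by
      by_contra h; push_neg at h
      exact hI h.1 h.2 nab Aab
    have h2 : c ∈ C ∨ d ∈ C := by
      by_contra h; push_neg at h
      exact hI h.1 h.2 ncd Acd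
    rcases h1 with h1 | h1 <;> rcases h2 with h2 | h2
    · exact N1 (hC h1 h2 nac)
    · exact N2 (hC h1 h2 nad)
    · exact N3 (hC h1 h2 nbc)
    · exact N4 (hC h1 h2 nbd)
  · rintro ⟨a, b, c, d, nab, nac, nad, nbc, nbd, ncd, Aab, Abc, Acd, Ada, Nac, Nbd⟩
    have h1 : a ∉ C ∨ c ∉ C := by
      by_contra h; push_neg at h
      exact Nac (hC h.1 h.2 nac)
    have h2 : b ∉ C ∨ d ∉ C := by
      by_contra h; push_neg at h
      exact Nbd (hC h.1 h.2 nbd)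
    rcases h1 with h1 | h1 <;> rcases h2 with h2 | h2
    · exact hI h1 h2 nab Aab
    · exact hI h1 h2 nad Ada.symm
    · exact hI h1 h2 nbc.symm Abc.symm
    · exact hI h1 h2 ncd Acd

lemma deleteAll_split (G : SimpleGraph W) : IsSplit (G.deleteEdges G.edgeSet) := by
  refine ⟨∅, by simp, ?_⟩
  intro x _ y _ _ hadj
  rw [SimpleGraph.deleteEdges_adj] at hadj
  exact hadj.2 (G.mem_edgeSet.mpr hadj.1)

end SplitAux

open Finset in
lemma foldes_hammer {V : Type*} [Fintype V] (H : SimpleGraph V)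
    (h2 : ¬∃ a b c d, TwoK2At H a b c d) (h4 : ¬∃ a b c d, C4At H a b c d)
    (h5 : ¬∃ a b c d e, C5At H a b c d e) : IsSplit H := by
  classical
  set 𝒞 : Finset (Finset V) := Finset.univ.filter (fun K => H.IsClique (K : Set V)) with h𝒞
  have hem : (∅ : Finset V) ∈ 𝒞 := by
    simp [h𝒞, SimpleGraph.isClique_empty]
  obtain ⟨K0, hK0, hK0max⟩ := 𝒞.exists_max_image Finset.card ⟨∅, hem⟩
  set m := K0.card with hm
  set 𝒞₂ : Finset (Finset V) := 𝒞.filter (fun K => K.card = m) with h𝒞₂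
  have hK0' : K0 ∈ 𝒞₂ := by simp [h𝒞₂, hK0, hm]
  set deg : V → ℕ := fun z => (Finset.univ.filter (fun w => H.Adj z w)).card with hdeg
  obtain ⟨K, hKmem, hKP⟩ := 𝒞₂.exists_max_image (fun K => ∑ v ∈ K, deg v) ⟨K0, hK0'⟩
  rw [h𝒞₂, Finset.mem_filter, h𝒞, Finset.mem_filter] at hKmem
  have hKcl : H.IsClique (K : Set V) := hKmem.1.2
  have hKm : K.card = m := hKmem.2
  have hmax : ∀ K' : Finset V, H.IsClique (K' : Set V) → K'.card ≤ m := by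
    intro K' h
    exact hK0max K' (by simp [h𝒞, h])
  have hPmax : ∀ K' : Finset V, H.IsClique (K' : Set V) → K'.card = m →
      ∑ v ∈ K', deg v ≤ ∑ v ∈ K, deg v := by
    intro K' h hc
    exact hKP K' (by simp [h𝒞₂, h𝒞, h, hc])
  refine ⟨(K : Set V), hKcl, ?_⟩
  intro x hx y hy hxy hadj
  rw [Set.mem_compl_iff, Finset.mem_coe] at hx hy
  -- the core argument, assuming every K-non-neighbor of x is a K-non-neighbor of y
  have key : ∀ x y : V, x ∉ K → y ∉ K → H.Adj x y →
      (∀ u ∈ K, ¬H.Adj x u → ¬H.Adj y u) → False := by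
    clear hx hy hxy hadj x y
    intro x y hxK hyK hxy hAB
    have hA : ∃ u ∈ K, ¬H.Adj x u := by
      by_contra h; push_neg at h
      have hcl : H.IsClique (insert x (K : Set V)) :=
        hKcl.insert fun b hb _ => h b hb
      have := hmax (insert x K) (by rw [Finset.coe_insert]; exact hcl)
      rw [Finset.card_insert_of_notMem hxK] at this
      omega
    obtain ⟨u, huK, hxu⟩ := hA
    have hyu : ¬H.Adj y u := hAB u huK hxu
    have hne_ux : u ≠ x := fun h => hxK (h ▸ huK)
    have hne_uy : u ≠ y := fun h => hyK (h ▸ huK)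
    have hxw : ∀ w ∈ K, w ≠ u → H.Adj x w := by
      intro w hwK hwu
      by_contra hxw
      have hyw := hAB w hwK hxw
      exact h2 ⟨u, w, x, y, hwu.symm, hne_ux, hne_uy,
        fun h => hxK (h ▸ hwK), fun h => hyK (h ▸ hwK), hxy.ne,
        hKcl huK hwK hwu.symm, hxy,
        fun h => hxu h.symm, fun h => hyu h.symm,
        fun h => hxw h.symm, fun h => hyw h.symm⟩
    -- exchange K ↦ insert x (K.erase u)
    have hxe : x ∉ K.erase u := fun h => hxK (Finset.mem_of_mem_erase h)
    have hKecl : H.IsClique ((insert x (K.erase u) : Finset V) : Set V) := by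
      rw [Finset.coe_insert]
      refine (hKcl.subset (by simp [Finset.coe_subset, Finset.erase_subset])).insert ?_
      intro b hb _
      rw [Finset.mem_coe, Finset.mem_erase] at hb
      exact hxw b hb.2 hb.1
    have hKecard : (insert x (K.erase u)).card = m := by
      rw [Finset.card_insert_of_notMem hxe, Finset.card_erase_add_one huK, hKm]
    have hsum := hPmax _ hKecl hKecard
    rw [Finset.sum_insert hxe] at hsum
    have hKsum : ∑ v ∈ K, deg v = deg u + ∑ v ∈ K.erase u, deg v :=
      (Finset.add_sum_erase K deg huK).symm
    have hdegle : deg x ≤ deg u := by omega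
    -- degree decomposition
    have hsplitdeg : ∀ z : V, deg z =
        (K.filter (fun w => H.Adj z w)).card + (Kᶜ.filter (fun w => H.Adj z w)).card := by
      intro z
      rw [← Finset.card_union_of_disjoint
        (Finset.disjoint_filter_filter disjoint_compl_right),
        ← Finset.filter_union, Finset.union_compl]
    have hxfil : K.filter (fun w => H.Adj x w) = K.erase u := by
      ext w
      simp only [Finset.mem_filter, Finset.mem_erase]
      constructor
      · rintro ⟨hw, hadj⟩
        exact ⟨fun h => hxu (h ▸ hadj), hw⟩
      · rintro ⟨hne, hw⟩
        exact ⟨hw, hxw w hw hne⟩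
    have hufil : K.filter (fun w => H.Adj u w) = K.erase u := by
      ext w
      simp only [Finset.mem_filter, Finset.mem_erase]
      constructor
      · rintro ⟨hw, hadj⟩
        exact ⟨fun h => H.irrefl (h ▸ hadj), hw⟩
      · rintro ⟨hne, hw⟩
        exact ⟨hw, hKcl huK hw hne.symm⟩
    have hcomple : (Kᶜ.filter (fun w => H.Adj x w)).card ≤
        (Kᶜ.filter (fun w => H.Adj u w)).card := by
      have d1 := hsplitdeg x
      have d2 := hsplitdeg u
      rw [hxfil] at d1
      rw [hufil] at d2
      omega
    have hypos : 0 < (Kᶜ.filter (fun w => H.Adj x w)).card := by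
      refine Finset.card_pos.mpr ⟨y, ?_⟩
      simp [Finset.mem_compl, hyK, hxy]
    obtain ⟨z, hz⟩ := Finset.card_pos.mp (lt_of_lt_of_le hypos hcomple)
    rw [Finset.mem_filter, Finset.mem_compl] at hz
    obtain ⟨hzK, huz⟩ := hz
    have hzx : z ≠ x := fun h => hxu (h ▸ huz).symm
    have hzy : z ≠ y := fun h => hyu (h ▸ huz).symm
    by_cases hxz : H.Adj x z
    · -- z is adjacent to everything in K, contradiction with maximality
      have hall : ∀ w ∈ K, H.Adj z w := by
        intro w hwK
        by_cases hwu : w = u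
        · exact hwu ▸ huz.symm
        by_contra hwz
        exact h4 ⟨w, u, z, x, hwu, fun h => hzK (h ▸ hwK), fun h => hxK (h ▸ hwK),
          huz.ne, hne_ux, hzx,
          hKcl hwK huK hwu, huz, hxz.symm, hxw w hwK hwu, fun h => hwz h.symm,
          fun h => hxu h.symm⟩
      have hcl : H.IsClique (insert z (K : Set V)) :=
        hKcl.insert fun b hb _ => hall b hb
      have := hmax (insert z K) (by rw [Finset.coe_insert]; exact hcl)
      rw [Finset.card_insert_of_notMem hzK] at this
      omega
    by_cases hyz : H.Adj y z
    · -- find w ∈ K not adjacent to z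
      have hw : ∃ w ∈ K, ¬H.Adj z w := by
        by_contra h; push_neg at h
        have hcl : H.IsClique (insert z (K : Set V)) :=
          hKcl.insert fun b hb _ => h b hb
        have := hmax (insert z K) (by rw [Finset.coe_insert]; exact hcl)
        rw [Finset.card_insert_of_notMem hzK] at this
        omega
      obtain ⟨w, hwK, hwz⟩ := hw
      have hwu : w ≠ u := fun h => hwz (h ▸ huz.symm)
      by_cases hwy : H.Adj y w
      · exact h4 ⟨w, y, z, u, fun h => hyK (h ▸ hwK), fun h => hzK (h ▸ hwK), hwu,
          hyz.ne, hne_uy.symm, (huz.ne).symm,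
          hwy.symm, hyz, huz.symm, hKcl huK hwK hwu.symm, fun h => hwz h.symm, hyu⟩
      · exact h5 ⟨w, x, y, z, u, fun h => hxK (h ▸ hwK), fun h => hyK (h ▸ hwK),
          fun h => hzK (h ▸ hwK), hwu, hxy.ne, hzx.symm, hne_ux.symm,
          hyz.ne, hne_uy.symm, (huz.ne).symm,
          (hxw w hwK hwu).symm, hxy, hyz, huz.symm, hKcl huK hwK hwu.symm,
          fun h => hwy h.symm, fun h => hwz h.symm, hxz, fun h => hxu h, hyu⟩
    · exact h2 ⟨u, z, x, y, huz.ne, hne_ux, hne_uy, hzx, hzy, hxy.ne, huz, hxy,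
        fun h => hxu h.symm, fun h => hyu h.symm, fun h => hxz h.symm, fun h => hyz h.symm⟩
  by_cases hc : ∀ u ∈ K, ¬H.Adj x u → ¬H.Adj y u
  · exact key x y hx hy hadj hc
  · push_neg at hc
    obtain ⟨u, huK, hxu, hyu⟩ := hc
    have hc2 : ∀ w ∈ K, ¬H.Adj y w → ¬H.Adj x w := by
      intro w hwK hyw hxwadj
      have hwu : u ≠ w := fun h => hyw (h ▸ hyu)
      exact h4 ⟨u, y, x, w, fun h => hy (h ▸ huK), fun h => hx (h ▸ huK), hwu,
        hxy.symm, fun h => hy (h ▸ hwK), fun h => hx (h ▸ hwK),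
        hyu.symm, hadj.symm, hxwadj, hKcl hwK huK (fun h => hwu h.symm), fun h => hxu h.symm, hyw⟩
    exact key y x hy hx hadj.symm hc2
lemma exists_split_del {V : Type*} [Fintype V] (H : SimpleGraph V)
    (hps : IsPseudoSplit H) :
    ∃ F ⊆ H.edgeSet, F.ncard ≤ 2 ∧ IsSplit (H.deleteEdges F) := by
  obtain ⟨h2, h4⟩ := hps
  by_cases h5 : ∃ a b c d e, C5At H a b c d e
  · obtain ⟨a, b, c, d, e, hC⟩ := h5
    have hCc := hC
    obtain ⟨nab, nac, nad, nae, nbc, nbd, nbe, ncd, nce, nde,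
      Aab, Abc, Acd, Ade, Aea, Nac, Nad, Nbd, Nbe, Nce⟩ := hCc
    refine ⟨{s(a, b), s(b, c)}, ?_, ?_, ?_⟩
    · rintro x (rfl | rfl)
      · exact H.mem_edgeSet.mpr Aab
      · exact H.mem_edgeSet.mpr Abc
    · exact le_trans (Set.ncard_insert_le _ _) (by simp)
    · -- the split partition
      set Cl : Set V := {d, e} ∪
        {v | H.Adj v a ∧ H.Adj v b ∧ H.Adj v c ∧ H.Adj v d ∧ H.Adj v e} with hCldef
      have hdCl : d ∈ Cl := Or.inl (Or.inl rfl)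
      have heCl : e ∈ Cl := Or.inl (Or.inr rfl)
      have hnb : ∀ u ∈ Cl, u ≠ b := by
        rintro u (hu | hu)
        · rcases hu with rfl | rfl
          · exact nbd.symm
          · exact nbe.symm
        · rintro rfl
          exact Nbd hu.2.2.2.1
      have hmemF : ∀ u v : V, u ∈ Cl → v ∈ Cl →
          s(u, v) ∉ ({s(a, b), s(b, c)} : Set (Sym2 V)) := by
        intro u v hu hv hmem
        simp only [Set.mem_insert_iff, Set.mem_singleton_iff, Sym2.eq_iff] at hmem
        rcases hmem with (⟨h1, h2⟩ | ⟨h1, h2⟩) | (⟨h1, h2⟩ | ⟨h1, h2⟩)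
        · exact hnb v hv h2
        · exact hnb u hu h1
        · exact hnb u hu h1
        · exact hnb v hv h2
      refine ⟨Cl, ?_, ?_⟩
      · -- clique
        intro u hu v hv huv
        rw [SimpleGraph.deleteEdges_adj]
        refine ⟨?_, hmemF u v hu hv⟩
        rcases hu with hu | hu <;> rcases hv with hv | hv
        · rcases hu with rfl | rfl <;> rcases hv with rfl | rfl
          · exact absurd rfl huv
          · exact Ade
          · exact Ade.symm
          · exact absurd rfl huv
        · rcases hu with rfl | rfl
          · exact hv.2.2.2.1.symm
          · exact hv.2.2.2.2.symm
        · rcases hv with rfl | rfl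
          · exact hu.2.2.2.1
          · exact hu.2.2.2.2
        · -- both complete: adjacent, else C4
          by_contra huvadj
          exact h4 ⟨u, a, v, c, hu.1.ne, huv, hu.2.2.1.ne, (hv.1.ne).symm, nac,
            hv.2.2.1.ne, hu.1, hv.1.symm, hv.2.2.1, hu.2.2.1.symm, huvadj, Nac⟩
      · -- independent set
        have hclchar : ∀ u, u ∉ Cl → (u = a ∨ u = b ∨ u = c ∨
            (¬H.Adj u a ∧ ¬H.Adj u b ∧ ¬H.Adj u c ∧ ¬H.Adj u d ∧ ¬H.Adj u e)) := by
          intro u hu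
          by_cases hS : u = a ∨ u = b ∨ u = c ∨ u = d ∨ u = e
          · rcases hS with rfl | rfl | rfl | rfl | rfl
            · exact Or.inl rfl
            · exact Or.inr (Or.inl rfl)
            · exact Or.inr (Or.inr (Or.inl rfl))
            · exact absurd hdCl hu
            · exact absurd heCl hu
          · push_neg at hS
            obtain ⟨ha, hb, hc, hd, he⟩ := hS
            rcases outside_c5 h2 h4 hC ha hb hc hd he with hcomp | hanti
            · exact absurd (Or.inr hcomp) hu
            · exact Or.inr (Or.inr (Or.inr hanti))
        intro u hu v hv huv
        rw [Set.mem_compl_iff] at hu hv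
        intro hadj
        rw [SimpleGraph.deleteEdges_adj] at hadj
        obtain ⟨hadj, hF⟩ := hadj
        have hanti2 : ∀ w x : V,
            (¬H.Adj w a ∧ ¬H.Adj w b ∧ ¬H.Adj w c ∧ ¬H.Adj w d ∧ ¬H.Adj w e) →
            (x = a ∨ x = b ∨ x = c) → ¬H.Adj w x := by
          rintro w x hw (rfl | rfl | rfl)
          · exact hw.1
          · exact hw.2.1
          · exact hw.2.2.1
        rcases hclchar u hu with hua | hub | huc | huanti
        · rcases hclchar v hv with hva | hvb | hvc | hvanti
          · exact huv (hua.trans hva.symm)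
          · subst hua; subst hvb
            exact hF (Or.inl rfl)
          · subst hua; subst hvc
            exact Nac hadj
          · exact hanti2 v u hvanti (Or.inl hua) hadj.symm
        · rcases hclchar v hv with hva | hvb | hvc | hvanti
          · subst hub; subst hva
            exact hF (Or.inl (Sym2.eq_swap))
          · exact huv (hub.trans hvb.symm)
          · subst hub; subst hvc
            exact hF (Or.inr rfl)
          · exact hanti2 v u hvanti (Or.inr (Or.inl hub)) hadj.symm
        · rcases hclchar v hv with hva | hvb | hvc | hvanti
          · subst huc; subst hva
            exact Nac hadj.symm
          · subst huc; subst hvb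
            exact hF (Or.inr (Sym2.eq_swap))
          · exact huv (huc.trans hvc.symm)
          · exact hanti2 v u hvanti (Or.inr (Or.inr huc)) hadj.symm
        · rcases hclchar v hv with hva | hvb | hvc | hvanti
          · exact hanti2 u v huanti (Or.inl hva) hadj
          · exact hanti2 u v huanti (Or.inr (Or.inl hvb)) hadj
          · exact hanti2 u v huanti (Or.inr (Or.inr hvc)) hadj
          · -- both anticomplete: 2K2 with edge de
            refine h2 ⟨u, v, d, e, huv, ?_, ?_, ?_, ?_, nde, hadj, Ade,
              huanti.2.2.2.1, huanti.2.2.2.2, hvanti.2.2.2.1, hvanti.2.2.2.2⟩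
            · rintro rfl; exact hu hdCl
            · rintro rfl; exact hu heCl
            · rintro rfl; exact hv hdCl
            · rintro rfl; exact hv heCl
  · exact ⟨∅, Set.empty_subset _, by simp, by
      rw [SimpleGraph.deleteEdges_empty]
      exact foldes_hammer H h2 h4 h5⟩
theorem stmt17 {V : Type*} [Fintype V] :
    (∀ H : SimpleGraph V, IsPseudoSplit H →
      ∀ a b c d e a' b' c' d' e' : V, C5At H a b c d e → C5At H a' b' c' d' e' →
        ({a, b, c, d, e} : Set V) = {a', b', c', d', e'}) ∧
    ∀ G : SimpleGraph V, psdNum G ≤ sedNum G ∧ sedNum G ≤ psdNum G + 2 := by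
  constructor
  · intro H hps a b c d e a' b' c' d' e' h5 h5'
    exact Set.Subset.antisymm (c5_subset hps.1 hps.2 h5' h5) (c5_subset hps.1 hps.2 h5 h5')
  · intro G
    have hsplit_wit : IsSplit (G.deleteEdges G.edgeSet) := deleteAll_split G
    have hsedne : {n | ∃ E ⊆ G.edgeSet, E.ncard = n ∧
        IsSplit (G.deleteEdges E)}.Nonempty :=
      ⟨_, G.edgeSet, subset_rfl, rfl, hsplit_wit⟩
    have hpsdne : {n | ∃ E ⊆ G.edgeSet, E.ncard = n ∧
        IsPseudoSplit (G.deleteEdges E)}.Nonempty :=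
      ⟨_, G.edgeSet, subset_rfl, rfl, split_imp_pseudo hsplit_wit⟩
    constructor
    · obtain ⟨E, hE, hcard, hsp⟩ := Nat.sInf_mem hsedne
      exact Nat.sInf_le ⟨E, hE, hcard, split_imp_pseudo hsp⟩
    · obtain ⟨E, hE, hcard, hps⟩ := Nat.sInf_mem hpsdne
      obtain ⟨F, hF, hF2, hsp⟩ := exists_split_del (G.deleteEdges E) hps
      have hFG : F ⊆ G.edgeSet := by
        intro x hx
        have hx2 := hF hx
        rw [SimpleGraph.edgeSet_deleteEdges] at hx2
        exact hx2.1
      have hEF : E ∪ F ⊆ G.edgeSet := Set.union_subset hE hFG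
      have hdel : G.deleteEdges (E ∪ F) = (G.deleteEdges E).deleteEdges F :=
        (SimpleGraph.deleteEdges_deleteEdges E F).symm
      have hle : sedNum G ≤ (E ∪ F).ncard :=
        Nat.sInf_le ⟨E ∪ F, hEF, rfl, by rw [hdel]; exact hsp⟩
      have hcard2 : (E ∪ F).ncard ≤ E.ncard + F.ncard := Set.ncard_union_le E F
      have hcard' : E.ncard = psdNum G := hcard
      omega
end

section
/- Let G be a graph and E₋ a minimum set of edges such that G − E₋ is a pseudo-split graph, and assume the minimum pseudo-split edge deletion number of G is strictly smaller than its minimum split edge deletion number. Let C ⊎ I ⊎ S be the pseudo-split partition of G − E₋ with S nonempty. Then the subgraph of G induced by S is a C₅ (no edge of E₋ lies inside S), and no vertex of I forms a triangle in G with two vertices of S. -/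
open scoped Classical

private lemma c5_rot {V : Type*} {H : SimpleGraph V} {a b c d e : V}
    (h : C5At H a b c d e) : C5At H b c d e a := by
  obtain ⟨n1,n2,n3,n4,n5,n6,n7,n8,n9,n10,e1,e2,e3,e4,e5,m1,m2,m3,m4,m5⟩ := h
  exact ⟨n5,n6,n7,n1.symm,n8,n9,n2.symm,n10,n3.symm,n4.symm,e2,e3,e4,e5,e1,
    m3,m4,m5,fun h => m1 h.symm,fun h => m2 h.symm⟩

private lemma c5_swap {V : Type*} {H : SimpleGraph V} {a b c d e : V}
    (h : C5At H a b c d e) : C5At H b a e d c := by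
  obtain ⟨n1,n2,n3,n4,n5,n6,n7,n8,n9,n10,e1,e2,e3,e4,e5,m1,m2,m3,m4,m5⟩ := h
  exact ⟨n1.symm,n7,n6,n5,n4,n3,n2,n10.symm,n9.symm,n8.symm,
    e1.symm,e5.symm,e4.symm,e3.symm,e2.symm,
    m4,m3,m2,m1,fun h => m5 h.symm⟩

private lemma contra_of_split {V : Type*} [Fintype V] {G : SimpleGraph V} {E : Set (Sym2 V)}
    (hE : E ⊆ G.edgeSet) (hps : IsPseudoSplit (G.deleteEdges E))
    (hmin : ∀ E' ⊆ G.edgeSet, IsPseudoSplit (G.deleteEdges E') → E.ncard ≤ E'.ncard)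
    (hlt : psdNum G < sedNum G)
    {E' : Set (Sym2 V)} (hE' : E' ⊆ G.edgeSet) (hcard : E'.ncard ≤ E.ncard)
    (hsplit : IsSplit (G.deleteEdges E')) : False := by
  have hub : sedNum G ≤ E'.ncard := Nat.sInf_le ⟨E', hE', rfl, hsplit⟩
  have hne : {n | ∃ E'' ⊆ G.edgeSet, E''.ncard = n ∧ IsPseudoSplit (G.deleteEdges E'')}.Nonempty :=
    ⟨E.ncard, E, hE, rfl, hps⟩
  obtain ⟨E₀, hE₀, hcard₀, hps₀⟩ := Nat.sInf_mem hne
  have hge : E.ncard ≤ psdNum G := by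
    have h := hmin E₀ hE₀ hps₀
    rw [hcard₀] at h
    exact h
  have : sedNum G ≤ psdNum G := le_trans hub (le_trans hcard hge)
  omega

private lemma noChord {V : Type*} [Fintype V] {G : SimpleGraph V} {E : Set (Sym2 V)}
    (hE : E ⊆ G.edgeSet) (hps : IsPseudoSplit (G.deleteEdges E))
    (hmin : ∀ E' ⊆ G.edgeSet, IsPseudoSplit (G.deleteEdges E') → E.ncard ≤ E'.ncard)
    (hlt : psdNum G < sedNum G)
    {C I S : Set V} (hunion : C ∪ I ∪ S = Set.univ)
    (hCS : Disjoint C S) (hIS : Disjoint I S)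
    (hC : (G.deleteEdges E).IsClique C) (hI : IsIndep (G.deleteEdges E) I)
    {a b c d e : V}
    (hSmem : ∀ x, x ∈ S ↔ (x = a ∨ x = b ∨ x = c ∨ x = d ∨ x = e))
    (h5 : C5At (G.deleteEdges E) a b c d e)
    (hSC : ∀ x ∈ S, ∀ y ∈ C, (G.deleteEdges E).Adj x y)
    (hSI : ∀ x ∈ S, ∀ y ∈ I, ¬(G.deleteEdges E).Adj x y) :
    s(a, c) ∉ E := by
  intro hmem
  obtain ⟨n1,n2,n3,n4,n5,n6,n7,n8,n9,n10,e1,e2,e3,e4,e5,m1,m2,m3,m4,m5⟩ := h5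
  have ha : a ∈ S := (hSmem a).2 (Or.inl rfl)
  have hb : b ∈ S := (hSmem b).2 (Or.inr (Or.inl rfl))
  have hc : c ∈ S := (hSmem c).2 (Or.inr (Or.inr (Or.inl rfl)))
  have hd : d ∈ S := (hSmem d).2 (Or.inr (Or.inr (Or.inr (Or.inl rfl))))
  have he : e ∈ S := (hSmem e).2 (Or.inr (Or.inr (Or.inr (Or.inr rfl))))
  have hCnotS : ∀ z ∈ C, z ∉ S := fun z hz => Set.disjoint_left.mp hCS hz
  have hInotS : ∀ z ∈ I, z ∉ S := fun z hz => Set.disjoint_left.mp hIS hz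
  have hqE : s(d, e) ∉ E := (SimpleGraph.deleteEdges_adj.mp e4).2
  set E' : Set (Sym2 V) := insert s(d, e) (E \ {s(a, c)}) with hE'def
  have hE'sub : E' ⊆ G.edgeSet := by
    intro z hz
    rcases Set.mem_insert_iff.mp hz with rfl | hz
    · exact G.mem_edgeSet.mpr (SimpleGraph.deleteEdges_adj.mp e4).1
    · exact hE hz.1
  have hcard : E'.ncard ≤ E.ncard := by
    have h1 : s(d, e) ∉ E \ {s(a, c)} := fun h => hqE h.1
    rw [hE'def, Set.ncard_insert_of_notMem h1 (Set.toFinite _)]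
    have h2 := Set.ncard_diff_singleton_add_one hmem (Set.toFinite _)
    omega
  have hne_q : ∀ x y : V, x ≠ d → x ≠ e → s(x, y) ≠ s(d, e) := by
    intro x y h1 h2 h
    rcases Sym2.eq_iff.mp h with ⟨h3, _⟩ | ⟨h3, _⟩
    · exact h1 h3
    · exact h2 h3
  have hadjE' : ∀ x y : V, (G.deleteEdges E).Adj x y → s(x, y) ≠ s(d, e) →
      (G.deleteEdges E').Adj x y := by
    intro x y hxy hne
    rw [SimpleGraph.deleteEdges_adj] at hxy ⊢
    refine ⟨hxy.1, fun hz => ?_⟩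
    rcases Set.mem_insert_iff.mp hz with h | h
    · exact hne h
    · exact hxy.2 h.1
  refine contra_of_split hE hps hmin hlt hE'sub hcard ⟨C ∪ {a, b, c}, ?_, ?_⟩
  · -- clique
    have adjCC : ∀ x ∈ C, ∀ y ∈ C, x ≠ y → (G.deleteEdges E').Adj x y := fun x hx y hy hxy =>
      hadjE' x y (hC hx hy hxy)
        (hne_q x y (fun h => hCnotS x hx (h ▸ hd)) (fun h => hCnotS x hx (h ▸ he)))
    have adjSC : ∀ z ∈ S, z ≠ d → z ≠ e → ∀ x ∈ C, (G.deleteEdges E').Adj z x :=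
      fun z hz h1 h2 x hx => hadjE' z x (hSC z hz x hx) (hne_q z x h1 h2)
    have adjab : (G.deleteEdges E').Adj a b := hadjE' a b e1 (hne_q a b n3 n4)
    have adjbc : (G.deleteEdges E').Adj b c := hadjE' b c e2 (hne_q b c n6 n7)
    have adjac : (G.deleteEdges E').Adj a c := by
      rw [SimpleGraph.deleteEdges_adj]
      refine ⟨G.mem_edgeSet.mp (hE hmem), fun hz => ?_⟩
      rcases Set.mem_insert_iff.mp hz with h | h
      · exact (hne_q a c n3 n4) h
      · exact h.2 rfl
    rintro x hx y hy hne
    have hx' : x ∈ C ∨ a = x ∨ b = x ∨ c = x := by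
      rcases hx with h | h
      · exact Or.inl h
      · simp only [Set.mem_insert_iff, Set.mem_singleton_iff] at h
        rcases h with h | h | h
        exacts [Or.inr (Or.inl h.symm), Or.inr (Or.inr (Or.inl h.symm)),
          Or.inr (Or.inr (Or.inr h.symm))]
    have hy' : y ∈ C ∨ a = y ∨ b = y ∨ c = y := by
      rcases hy with h | h
      · exact Or.inl h
      · simp only [Set.mem_insert_iff, Set.mem_singleton_iff] at h
        rcases h with h | h | h
        exacts [Or.inr (Or.inl h.symm), Or.inr (Or.inr (Or.inl h.symm)),
          Or.inr (Or.inr (Or.inr h.symm))]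
    rcases hx' with h1 | rfl | rfl | rfl <;> rcases hy' with h2 | rfl | rfl | rfl
    · exact adjCC x h1 y h2 hne
    · exact (adjSC a ha n3 n4 x h1).symm
    · exact (adjSC b hb n6 n7 x h1).symm
    · exact (adjSC c hc n8 n9 x h1).symm
    · exact adjSC a ha n3 n4 y h2
    · exact absurd rfl hne
    · exact adjab
    · exact adjac
    · exact adjSC b hb n6 n7 y h2
    · exact adjab.symm
    · exact absurd rfl hne
    · exact adjbc
    · exact adjSC c hc n8 n9 y h2
    · exact adjac.symm
    · exact adjbc.symm
    · exact absurd rfl hne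
  · -- independent
    rintro x hx y hy hne hadj
    simp only [Set.mem_compl_iff, Set.mem_union, Set.mem_insert_iff, Set.mem_singleton_iff,
      not_or] at hx hy
    obtain ⟨hxC, hxa, hxb, hxc⟩ := hx
    obtain ⟨hyC, hya, hyb, hyc⟩ := hy
    have hx' : x ∈ I ∨ d = x ∨ e = x := by
      have hxu : x ∈ C ∪ I ∪ S := by rw [hunion]; trivial
      rcases hxu with (h | h) | h
      · exact absurd h hxC
      · exact Or.inl h
      · rcases (hSmem x).1 h with h | h | h | h | h
        · exact absurd h hxa
        · exact absurd h hxb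
        · exact absurd h hxc
        · exact Or.inr (Or.inl h.symm)
        · exact Or.inr (Or.inr h.symm)
    have hy' : y ∈ I ∨ d = y ∨ e = y := by
      have hyu : y ∈ C ∪ I ∪ S := by rw [hunion]; trivial
      rcases hyu with (h | h) | h
      · exact absurd h hyC
      · exact Or.inl h
      · rcases (hSmem y).1 h with h | h | h | h | h
        · exact absurd h hya
        · exact absurd h hyb
        · exact absurd h hyc
        · exact Or.inr (Or.inl h.symm)
        · exact Or.inr (Or.inr h.symm)
    rw [SimpleGraph.deleteEdges_adj] at hadj
    obtain ⟨hGxy, hE'xy⟩ := hadj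
    have hqne : s(x, y) ≠ s(d, e) := fun h => hE'xy (by rw [h]; exact Set.mem_insert _ _)
    have hnotp : s(x, y) ≠ s(a, c) := by
      intro h
      rcases Sym2.eq_iff.mp h with ⟨h3, _⟩ | ⟨h3, _⟩
      · exact hxa h3
      · exact hxc h3
    have hnotE : s(x, y) ∉ E := fun h =>
      hE'xy (Set.mem_insert_iff.mpr (Or.inr ⟨h, fun hs => hnotp hs⟩))
    have hadjE : (G.deleteEdges E).Adj x y := SimpleGraph.deleteEdges_adj.mpr ⟨hGxy, hnotE⟩
    rcases hx' with h1 | rfl | rfl <;> rcases hy' with h2 | rfl | rfl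
    · exact hI h1 h2 hne hadjE
    · exact hSI d hd x h1 hadjE.symm
    · exact hSI e he x h1 hadjE.symm
    · exact hSI d hd y h2 hadjE
    · exact hne rfl
    · exact hqne rfl
    · exact hSI e he y h2 hadjE
    · exact hqne (Sym2.eq_swap)
    · exact hne rfl

private lemma noTri {V : Type*} [Fintype V] {G : SimpleGraph V} {E : Set (Sym2 V)}
    (hE : E ⊆ G.edgeSet) (hps : IsPseudoSplit (G.deleteEdges E))
    (hmin : ∀ E' ⊆ G.edgeSet, IsPseudoSplit (G.deleteEdges E') → E.ncard ≤ E'.ncard)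
    (hlt : psdNum G < sedNum G)
    {C I S : Set V} (hunion : C ∪ I ∪ S = Set.univ)
    (hCS : Disjoint C S) (hIS : Disjoint I S)
    (hC : (G.deleteEdges E).IsClique C) (hI : IsIndep (G.deleteEdges E) I)
    {a b c d e : V}
    (hSmem : ∀ x, x ∈ S ↔ (x = a ∨ x = b ∨ x = c ∨ x = d ∨ x = e))
    (h5 : C5At (G.deleteEdges E) a b c d e)
    (hSC : ∀ x ∈ S, ∀ y ∈ C, (G.deleteEdges E).Adj x y)
    (hSI : ∀ x ∈ S, ∀ y ∈ I, ¬(G.deleteEdges E).Adj x y)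
    {u : V} (hu : u ∈ I) (hua : G.Adj u a) (hub : G.Adj u b) : False := by
  obtain ⟨n1,n2,n3,n4,n5,n6,n7,n8,n9,n10,e1,e2,e3,e4,e5,m1,m2,m3,m4,m5⟩ := h5
  have ha : a ∈ S := (hSmem a).2 (Or.inl rfl)
  have hb : b ∈ S := (hSmem b).2 (Or.inr (Or.inl rfl))
  have hc : c ∈ S := (hSmem c).2 (Or.inr (Or.inr (Or.inl rfl)))
  have hd : d ∈ S := (hSmem d).2 (Or.inr (Or.inr (Or.inr (Or.inl rfl))))
  have he : e ∈ S := (hSmem e).2 (Or.inr (Or.inr (Or.inr (Or.inr rfl))))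
  have hCnotS : ∀ z ∈ C, z ∉ S := fun z hz => Set.disjoint_left.mp hCS hz
  have hInotS : ∀ z ∈ I, z ∉ S := fun z hz => Set.disjoint_left.mp hIS hz
  have hq1E : s(c, d) ∉ E := (SimpleGraph.deleteEdges_adj.mp e3).2
  have hq2E : s(d, e) ∉ E := (SimpleGraph.deleteEdges_adj.mp e4).2
  have hp1 : s(u, a) ∈ E := by
    by_contra h
    exact hSI a ha u hu (SimpleGraph.deleteEdges_adj.mpr
      ⟨hua.symm, by rw [Sym2.eq_swap]; exact h⟩)
  have hp2 : s(u, b) ∈ E := by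
    by_contra h
    exact hSI b hb u hu (SimpleGraph.deleteEdges_adj.mpr
      ⟨hub.symm, by rw [Sym2.eq_swap]; exact h⟩)
  have hp12 : s(u, a) ≠ s(u, b) := by
    intro h
    rcases Sym2.eq_iff.mp h with ⟨_, h3⟩ | ⟨h3, h4⟩
    · exact n1 h3
    · exact n1 (h4.trans h3)
  set D : Set (Sym2 V) := E \ {s(u, a), s(u, b)} with hDdef
  set E' : Set (Sym2 V) := insert s(c, d) (insert s(d, e) D) with hE'def
  have hE'sub : E' ⊆ G.edgeSet := by
    intro z hz
    rcases Set.mem_insert_iff.mp hz with rfl | hz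
    · exact G.mem_edgeSet.mpr (SimpleGraph.deleteEdges_adj.mp e3).1
    rcases Set.mem_insert_iff.mp hz with rfl | hz
    · exact G.mem_edgeSet.mpr (SimpleGraph.deleteEdges_adj.mp e4).1
    · exact hE hz.1
  have hcard : E'.ncard ≤ E.ncard := by
    have hb1 : E'.ncard ≤ (insert s(d, e) D).ncard + 1 := Set.ncard_insert_le _ _
    have hb2 : (insert s(d, e) D).ncard ≤ D.ncard + 1 := Set.ncard_insert_le _ _
    have hEeq : E = insert s(u, a) (insert s(u, b) D) := by
      ext z
      simp only [hDdef, Set.mem_insert_iff, Set.mem_diff, Set.mem_singleton_iff]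
      constructor
      · intro hz
        by_cases h1 : z = s(u, a)
        · exact Or.inl h1
        by_cases h2 : z = s(u, b)
        · exact Or.inr (Or.inl h2)
        · exact Or.inr (Or.inr ⟨hz, by simp [h1, h2]⟩)
      · rintro (rfl | rfl | hz)
        · exact hp1
        · exact hp2
        · exact hz.1
    have hnm2 : s(u, b) ∉ D := fun h => h.2 (by simp)
    have hnm1 : s(u, a) ∉ insert s(u, b) D := by
      intro h
      rcases Set.mem_insert_iff.mp h with h | h
      · exact hp12 h
      · exact h.2 (by simp)
    have : E.ncard = D.ncard + 2 := by
      rw [hEeq, Set.ncard_insert_of_notMem hnm1 (Set.toFinite _),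
        Set.ncard_insert_of_notMem hnm2 (Set.toFinite _)]
    omega
  have hne_q1 : ∀ x y : V, x ≠ c → x ≠ d → s(x, y) ≠ s(c, d) := by
    intro x y h1 h2 h
    rcases Sym2.eq_iff.mp h with ⟨h3, _⟩ | ⟨h3, _⟩
    · exact h1 h3
    · exact h2 h3
  have hne_q2 : ∀ x y : V, x ≠ d → x ≠ e → s(x, y) ≠ s(d, e) := by
    intro x y h1 h2 h
    rcases Sym2.eq_iff.mp h with ⟨h3, _⟩ | ⟨h3, _⟩
    · exact h1 h3
    · exact h2 h3
  have hadjE' : ∀ x y : V, (G.deleteEdges E).Adj x y → s(x, y) ≠ s(c, d) →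
      s(x, y) ≠ s(d, e) → (G.deleteEdges E').Adj x y := by
    intro x y hxy hne1 hne2
    rw [SimpleGraph.deleteEdges_adj] at hxy ⊢
    refine ⟨hxy.1, fun hz => ?_⟩
    rcases Set.mem_insert_iff.mp hz with h | h
    · exact hne1 h
    rcases Set.mem_insert_iff.mp h with h | h
    · exact hne2 h
    · exact hxy.2 h.1
  refine contra_of_split hE hps hmin hlt hE'sub hcard ⟨C ∪ {a, b}, ?_, ?_⟩
  · -- clique on C ∪ {a, b}
    have adjCC : ∀ x ∈ C, ∀ y ∈ C, x ≠ y → (G.deleteEdges E').Adj x y := fun x hx y hy hxy =>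
      hadjE' x y (hC hx hy hxy)
        (hne_q1 x y (fun h => hCnotS x hx (h ▸ hc)) (fun h => hCnotS x hx (h ▸ hd)))
        (hne_q2 x y (fun h => hCnotS x hx (h ▸ hd)) (fun h => hCnotS x hx (h ▸ he)))
    have adjSC : ∀ z ∈ S, z ≠ c → z ≠ d → z ≠ e → ∀ x ∈ C, (G.deleteEdges E').Adj z x :=
      fun z hz h1 h2 h3 x hx =>
        hadjE' z x (hSC z hz x hx) (hne_q1 z x h1 h2) (hne_q2 z x h2 h3)
    have adjab : (G.deleteEdges E').Adj a b :=
      hadjE' a b e1 (hne_q1 a b n2 n3) (hne_q2 a b n3 n4)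
    rintro x hx y hy hne
    have hx' : x ∈ C ∨ a = x ∨ b = x := by
      rcases hx with h | h
      · exact Or.inl h
      · simp only [Set.mem_insert_iff, Set.mem_singleton_iff] at h
        rcases h with h | h
        exacts [Or.inr (Or.inl h.symm), Or.inr (Or.inr h.symm)]
    have hy' : y ∈ C ∨ a = y ∨ b = y := by
      rcases hy with h | h
      · exact Or.inl h
      · simp only [Set.mem_insert_iff, Set.mem_singleton_iff] at h
        rcases h with h | h
        exacts [Or.inr (Or.inl h.symm), Or.inr (Or.inr h.symm)]
    rcases hx' with h1 | rfl | rfl <;> rcases hy' with h2 | rfl | rfl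
    · exact adjCC x h1 y h2 hne
    · exact (adjSC a ha n2 n3 n4 x h1).symm
    · exact (adjSC b hb n5 n6 n7 x h1).symm
    · exact adjSC a ha n2 n3 n4 y h2
    · exact absurd rfl hne
    · exact adjab
    · exact adjSC b hb n5 n6 n7 y h2
    · exact adjab.symm
    · exact absurd rfl hne
  · -- independent on (C ∪ {a, b})ᶜ
    rintro x hx y hy hne hadj
    simp only [Set.mem_compl_iff, Set.mem_union, Set.mem_insert_iff, Set.mem_singleton_iff,
      not_or] at hx hy
    obtain ⟨hxC, hxa, hxb⟩ := hx
    obtain ⟨hyC, hya, hyb⟩ := hy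
    have hx' : x ∈ I ∨ c = x ∨ d = x ∨ e = x := by
      have hxu : x ∈ C ∪ I ∪ S := by rw [hunion]; trivial
      rcases hxu with (h | h) | h
      · exact absurd h hxC
      · exact Or.inl h
      · rcases (hSmem x).1 h with h | h | h | h | h
        · exact absurd h hxa
        · exact absurd h hxb
        · exact Or.inr (Or.inl h.symm)
        · exact Or.inr (Or.inr (Or.inl h.symm))
        · exact Or.inr (Or.inr (Or.inr h.symm))
    have hy' : y ∈ I ∨ c = y ∨ d = y ∨ e = y := by
      have hyu : y ∈ C ∪ I ∪ S := by rw [hunion]; trivial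
      rcases hyu with (h | h) | h
      · exact absurd h hyC
      · exact Or.inl h
      · rcases (hSmem y).1 h with h | h | h | h | h
        · exact absurd h hya
        · exact absurd h hyb
        · exact Or.inr (Or.inl h.symm)
        · exact Or.inr (Or.inr (Or.inl h.symm))
        · exact Or.inr (Or.inr (Or.inr h.symm))
    rw [SimpleGraph.deleteEdges_adj] at hadj
    obtain ⟨hGxy, hE'xy⟩ := hadj
    have hqne1 : s(x, y) ≠ s(c, d) := fun h => hE'xy (by rw [h]; exact Set.mem_insert _ _)
    have hqne2 : s(x, y) ≠ s(d, e) := fun h =>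
      hE'xy (by rw [h]; exact Set.mem_insert_iff.mpr (Or.inr (Set.mem_insert _ _)))
    have hxna : x ≠ a := by
      rcases hx' with h | rfl | rfl | rfl
      · exact fun hh => hInotS x h (hh ▸ ha)
      · exact n2.symm
      · exact n3.symm
      · exact n4.symm
    have hxnb : x ≠ b := by
      rcases hx' with h | rfl | rfl | rfl
      · exact fun hh => hInotS x h (hh ▸ hb)
      · exact n5.symm
      · exact n6.symm
      · exact n7.symm
    have hyna : y ≠ a := by
      rcases hy' with h | rfl | rfl | rfl
      · exact fun hh => hInotS y h (hh ▸ ha)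
      · exact n2.symm
      · exact n3.symm
      · exact n4.symm
    have hynb : y ≠ b := by
      rcases hy' with h | rfl | rfl | rfl
      · exact fun hh => hInotS y h (hh ▸ hb)
      · exact n5.symm
      · exact n6.symm
      · exact n7.symm
    have hnotE : s(x, y) ∉ E := by
      intro hz
      apply hE'xy
      refine Set.mem_insert_iff.mpr (Or.inr (Set.mem_insert_iff.mpr (Or.inr ⟨hz, ?_⟩)))
      intro hm2
      rcases Set.mem_insert_iff.mp hm2 with h | h
      · rcases Sym2.eq_iff.mp h with ⟨_, h4⟩ | ⟨h3, _⟩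
        · exact hyna h4
        · exact hxna h3
      · have h := Set.mem_singleton_iff.mp h
        rcases Sym2.eq_iff.mp h with ⟨_, h4⟩ | ⟨h3, _⟩
        · exact hynb h4
        · exact hxnb h3
    have hadjE : (G.deleteEdges E).Adj x y := SimpleGraph.deleteEdges_adj.mpr ⟨hGxy, hnotE⟩
    rcases hx' with h1 | rfl | rfl | rfl <;> rcases hy' with h2 | rfl | rfl | rfl
    · exact hI h1 h2 hne hadjE
    · exact hSI c hc x h1 hadjE.symm
    · exact hSI d hd x h1 hadjE.symm
    · exact hSI e he x h1 hadjE.symm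
    · exact hSI c hc y h2 hadjE
    · exact hne rfl
    · exact hqne1 rfl
    · exact m5 hadjE
    · exact hSI d hd y h2 hadjE
    · exact hqne1 Sym2.eq_swap
    · exact hne rfl
    · exact hqne2 rfl
    · exact hSI e he y h2 hadjE
    · exact m5 hadjE.symm
    · exact hqne2 Sym2.eq_swap
    · exact hne rfl

private lemma or_rot5 {p q r s t : Prop} : (p ∨ q ∨ r ∨ s ∨ t) ↔ (q ∨ r ∨ s ∨ t ∨ p) := by
  tauto

private lemma or_swp5 {p q r s t : Prop} : (p ∨ q ∨ r ∨ s ∨ t) ↔ (q ∨ p ∨ t ∨ s ∨ r) := by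
  tauto

theorem stmt18 {V : Type*} [Fintype V] (G : SimpleGraph V) (E : Set (Sym2 V))
    (hE : E ⊆ G.edgeSet) (hps : IsPseudoSplit (G.deleteEdges E))
    (hmin : ∀ E' ⊆ G.edgeSet, IsPseudoSplit (G.deleteEdges E') → E.ncard ≤ E'.ncard)
    (hlt : psdNum G < sedNum G)
    (C I S : Set V)
    (hunion : C ∪ I ∪ S = Set.univ)
    (hCI : Disjoint C I) (hCS : Disjoint C S) (hIS : Disjoint I S)
    (hC : (G.deleteEdges E).IsClique C) (hI : IsIndep (G.deleteEdges E) I)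
    (hS : ∃ a b c d e : V, S = {a, b, c, d, e} ∧ C5At (G.deleteEdges E) a b c d e)
    (hSC : ∀ x ∈ S, ∀ y ∈ C, (G.deleteEdges E).Adj x y)
    (hSI : ∀ x ∈ S, ∀ y ∈ I, ¬(G.deleteEdges E).Adj x y) :
    (∀ x ∈ S, ∀ y ∈ S, s(x, y) ∉ E) ∧
      ¬∃ u ∈ I, ∃ x ∈ S, ∃ y ∈ S, G.Adj u x ∧ G.Adj u y ∧ G.Adj x y := by
  obtain ⟨a, b, c, d, e, hSet, h5⟩ := hS
  have hSmem : ∀ x, x ∈ S ↔ (x = a ∨ x = b ∨ x = c ∨ x = d ∨ x = e) := by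
    intro x; rw [hSet]; simp [Set.mem_insert_iff]
  obtain ⟨n1,n2,n3,n4,n5,n6,n7,n8,n9,n10,e1,e2,e3,e4,e5,m1,m2,m3,m4,m5⟩ := id h5
  have r1 := c5_rot h5
  have r2 := c5_rot r1
  have r3 := c5_rot r2
  have r4 := c5_rot r3
  have t1 : ∀ x, x ∈ S ↔ (x = b ∨ x = c ∨ x = d ∨ x = e ∨ x = a) :=
    fun x => (hSmem x).trans or_rot5
  have t2 : ∀ x, x ∈ S ↔ (x = c ∨ x = d ∨ x = e ∨ x = a ∨ x = b) :=
    fun x => (t1 x).trans or_rot5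
  have t3 : ∀ x, x ∈ S ↔ (x = d ∨ x = e ∨ x = a ∨ x = b ∨ x = c) :=
    fun x => (t2 x).trans or_rot5
  have t4 : ∀ x, x ∈ S ↔ (x = e ∨ x = a ∨ x = b ∨ x = c ∨ x = d) :=
    fun x => (t3 x).trans or_rot5
  have hdiag : ∀ z : V, s(z, z) ∉ E := fun z h => G.irrefl (G.mem_edgeSet.mp (hE h))
  have hedge : ∀ x y : V, (G.deleteEdges E).Adj x y → s(x, y) ∉ E :=
    fun x y h => (SimpleGraph.deleteEdges_adj.mp h).2
  have hswap : ∀ x y : V, s(x, y) ∉ E → s(y, x) ∉ E := fun x y h => by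
    rw [Sym2.eq_swap]; exact h
  have hac : s(a, c) ∉ E := noChord hE hps hmin hlt hunion hCS hIS hC hI hSmem h5 hSC hSI
  have hbd : s(b, d) ∉ E := noChord hE hps hmin hlt hunion hCS hIS hC hI t1 r1 hSC hSI
  have hce : s(c, e) ∉ E := noChord hE hps hmin hlt hunion hCS hIS hC hI t2 r2 hSC hSI
  have hda : s(d, a) ∉ E := noChord hE hps hmin hlt hunion hCS hIS hC hI t3 r3 hSC hSI
  have heb : s(e, b) ∉ E := noChord hE hps hmin hlt hunion hCS hIS hC hI t4 r4 hSC hSI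
  have part1 : ∀ x ∈ S, ∀ y ∈ S, s(x, y) ∉ E := by
    intro x hx y hy
    rcases (hSmem x).1 hx with h | h | h | h | h <;>
      rcases (hSmem y).1 hy with h' | h' | h' | h' | h' <;>
      rw [h, h']
    exacts [hdiag _, hedge _ _ e1, hac, hswap _ _ hda, hswap _ _ (hedge _ _ e5),
      hswap _ _ (hedge _ _ e1), hdiag _, hedge _ _ e2, hbd, hswap _ _ heb,
      hswap _ _ hac, hswap _ _ (hedge _ _ e2), hdiag _, hedge _ _ e3, hce,
      hda, hswap _ _ hbd, hswap _ _ (hedge _ _ e3), hdiag _, hedge _ _ e4,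
      hedge _ _ e5, heb, hswap _ _ hce, hswap _ _ (hedge _ _ e4), hdiag _]
  refine ⟨part1, ?_⟩
  rintro ⟨u, hu, x, hx, y, hy, hux, huy, hxy⟩
  have hadjxy : (G.deleteEdges E).Adj x y :=
    SimpleGraph.deleteEdges_adj.mpr ⟨hxy, part1 x hx y hy⟩
  have s0 := c5_swap h5
  have s1 := c5_swap r1
  have s2 := c5_swap r2
  have s3 := c5_swap r3
  have s4 := c5_swap r4
  have u0 : ∀ z, z ∈ S ↔ (z = b ∨ z = a ∨ z = e ∨ z = d ∨ z = c) :=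
    fun z => (hSmem z).trans or_swp5
  have u1 : ∀ z, z ∈ S ↔ (z = c ∨ z = b ∨ z = a ∨ z = e ∨ z = d) :=
    fun z => (t1 z).trans or_swp5
  have u2 : ∀ z, z ∈ S ↔ (z = d ∨ z = c ∨ z = b ∨ z = a ∨ z = e) :=
    fun z => (t2 z).trans or_swp5
  have u3 : ∀ z, z ∈ S ↔ (z = e ∨ z = d ∨ z = c ∨ z = b ∨ z = a) :=
    fun z => (t3 z).trans or_swp5
  have u4 : ∀ z, z ∈ S ↔ (z = a ∨ z = e ∨ z = d ∨ z = c ∨ z = b) :=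
    fun z => (t4 z).trans or_swp5
  rcases (hSmem x).1 hx with h | h | h | h | h <;>
    rcases (hSmem y).1 hy with h' | h' | h' | h' | h' <;>
    rw [h] at hux hadjxy <;> rw [h'] at huy hadjxy
  exacts [(G.deleteEdges E).irrefl hadjxy,
    noTri hE hps hmin hlt hunion hCS hIS hC hI hSmem h5 hSC hSI hu hux huy,
    m1 hadjxy, m2 hadjxy,
    noTri hE hps hmin hlt hunion hCS hIS hC hI u4 s4 hSC hSI hu hux huy,
    noTri hE hps hmin hlt hunion hCS hIS hC hI u0 s0 hSC hSI hu hux huy,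
    (G.deleteEdges E).irrefl hadjxy,
    noTri hE hps hmin hlt hunion hCS hIS hC hI t1 r1 hSC hSI hu hux huy,
    m3 hadjxy, m4 hadjxy,
    m1 hadjxy.symm,
    noTri hE hps hmin hlt hunion hCS hIS hC hI u1 s1 hSC hSI hu hux huy,
    (G.deleteEdges E).irrefl hadjxy,
    noTri hE hps hmin hlt hunion hCS hIS hC hI t2 r2 hSC hSI hu hux huy,
    m5 hadjxy,
    m2 hadjxy.symm, m3 hadjxy.symm,
    noTri hE hps hmin hlt hunion hCS hIS hC hI u2 s2 hSC hSI hu hux huy,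
    (G.deleteEdges E).irrefl hadjxy,
    noTri hE hps hmin hlt hunion hCS hIS hC hI t3 r3 hSC hSI hu hux huy,
    noTri hE hps hmin hlt hunion hCS hIS hC hI t4 r4 hSC hSI hu hux huy,
    m4 hadjxy.symm, m5 hadjxy.symm,
    noTri hE hps hmin hlt hunion hCS hIS hC hI u3 s3 hSC hSI hu hux huy,
    (G.deleteEdges E).irrefl hadjxy]
end
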